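/- Consider a conservative mass-action system such that all of its critical semi-locking sets are dynamically non-emptiable and it has no two distinct nested critical locking sets (no distinct critical locking sets I₁, I₂ with I₁ ⊂ I₂). Then the system is persistent: for every x₀ ∈ ℝ^m_{>0}, ω(x₀) ∩ ∂ℝ^m_{>0} = ∅. -/

import Mathlib

open scoped BigOperators
open Matrix Filter

/-- The stoichiometric matrix `Γ ∈ ℝ^{m×r}`, `Γ j i = β i j - α i j`. -/
noncomputable def Gamma {m r : ℕ} (a b : Fin r → Fin m → ℕ) : Matrix (Fin m) (Fin r) ℝ :=
  fun j i => (b i j : ℝ) - (a i j : ℝ)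

/-- Mass-action reaction rates `R_i(x) = k_i ∏_j x_j^{α_{ij}}`. -/
noncomputable def rate {m r : ℕ} (a : Fin r → Fin m → ℕ) (k : Fin r → ℝ)
    (x : Fin m → ℝ) : Fin r → ℝ :=
  fun i => k i * ∏ j, x j ^ (a i j)

/-- A nonempty `I` is a semi-locking set (siphon) if every reaction producing a species
in `I` consumes a species in `I`. -/
def IsSemiLocking {m r : ℕ} (a b : Fin r → Fin m → ℕ) (I : Set (Fin m)) : Prop :=
  I.Nonempty ∧ ∀ i : Fin r, (∃ j ∈ I, 0 < b i j) → ∃ l ∈ I, 0 < a i l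

/-- A nonempty `I` is a locking set (deadlock) if every reaction consumes a species in `I`. -/
def IsLocking {m r : ℕ} (a : Fin r → Fin m → ℕ) (I : Set (Fin m)) : Prop :=
  I.Nonempty ∧ ∀ i : Fin r, ∃ l ∈ I, 0 < a i l

/-- `L_I = {x ∈ ℝ^m_{≥0} : x_i = 0 for i ∈ I, x_i > 0 for i ∉ I}`. -/
def LI {m : ℕ} (I : Set (Fin m)) : Set (Fin m → ℝ) :=
  {x | (∀ i, 0 ≤ x i) ∧ (∀ i ∈ I, x i = 0) ∧ ∀ i ∉ I, 0 < x i}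

/-- Boundary of the positive orthant of `ℝ^m`. -/
def posBoundary (m : ℕ) : Set (Fin m → ℝ) :=
  {x | (∀ i, 0 ≤ x i) ∧ ∃ i, x i = 0}

/-- The stoichiometric subspace `S = range Γ`. -/
noncomputable def stoichSubspace {m r : ℕ} (a b : Fin r → Fin m → ℕ) :
    Submodule ℝ (Fin m → ℝ) :=
  LinearMap.range (Gamma a b).mulVecLin

/-- The positive stoichiometric compatibility class `C_{x₀} = (x₀ + S) ∩ ℝ^m_{>0}`. -/
def compatClass {m r : ℕ} (a b : Fin r → Fin m → ℕ) (x₀ : Fin m → ℝ) :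
    Set (Fin m → ℝ) :=
  {x | (∀ i, 0 < x i) ∧ x - x₀ ∈ stoichSubspace a b}

/-- `F_I = closure(C_{x₀}) ∩ L_I`. -/
def FI {m r : ℕ} (a b : Fin r → Fin m → ℕ) (x₀ : Fin m → ℝ) (I : Set (Fin m)) :
    Set (Fin m → ℝ) :=
  closure (compatClass a b x₀) ∩ LI I

/-- The dimension of the affine hull of a set in `ℝ^m`. -/
noncomputable def setDim {m : ℕ} (F : Set (Fin m → ℝ)) : ℕ :=
  Module.finrank ℝ (affineSpan ℝ F).direction

/-- `F` is a facet of a compatibility class: nonempty with affine-hull dimension `s - 1`,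
where `s = rank Γ`. -/
def IsFacet {m r : ℕ} (a b : Fin r → Fin m → ℕ) (F : Set (Fin m → ℝ)) : Prop :=
  F.Nonempty ∧ setDim F = (Gamma a b).rank - 1

/-- `F` is a vertex: nonempty with affine-hull dimension `0`. -/
def IsVertex {m : ℕ} (F : Set (Fin m → ℝ)) : Prop :=
  F.Nonempty ∧ setDim F = 0

/-- A global forward solution of the mass-action system `ẋ = Γ R(x)`. -/
def IsForwardSolution {m r : ℕ} (a b : Fin r → Fin m → ℕ) (k : Fin r → ℝ)
    (x : ℝ → Fin m → ℝ) : Prop :=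
  ∀ t : ℝ, 0 ≤ t → HasDerivAt x ((Gamma a b).mulVec (rate a k (x t))) t

/-- The ω-limit set of a forward trajectory. -/
def omegaLimitSet {m : ℕ} (x : ℝ → Fin m → ℝ) : Set (Fin m → ℝ) :=
  {y | MapClusterPt y atTop x}

/-- `R_i ≼_I R_j` : `α i l ≥ α j l` for all `l ∈ I`, strict for some `l ∈ I`. -/
def prec {m r : ℕ} (a : Fin r → Fin m → ℕ) (I : Set (Fin m)) (i j : Fin r) : Prop :=
  (∀ l ∈ I, a j l ≤ a i l) ∧ ∃ l ∈ I, a j l < a i l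

/-- `R_I = {(i,j) : R_i ≼_I R_j}`. -/
def precSet {m r : ℕ} (a : Fin r → Fin m → ℕ) (I : Set (Fin m)) : Set (Fin r × Fin r) :=
  {p | prec a I p.1 p.2}

/-- The feasibility cone relative to `J`. -/
def feasCone {r : ℕ} (J : Set (Fin r × Fin r)) (ε : ℝ) : Set (Fin r → ℝ) :=
  {v | (∀ i, 0 ≤ v i) ∧ ∀ p ∈ J, v p.1 ≤ ε * v p.2}

/-- The criticality cone `C(I)`. -/
def critCone {m r : ℕ} (a b : Fin r → Fin m → ℕ) (I : Set (Fin m)) : Set (Fin r → ℝ) :=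
  {v | (∀ i, 0 ≤ v i) ∧ ∀ l ∈ I, (Gamma a b).mulVec v l ≤ 0}

/-- `ker(I,J,ε)`. -/
def kerIJ {m r : ℕ} (a b : Fin r → Fin m → ℕ) (I : Set (Fin m))
    (J : Set (Fin r × Fin r)) (ε : ℝ) : Set (Fin r → ℝ) :=
  {v | (∀ i, 0 ≤ v i) ∧ (∀ l ∈ I, (Gamma a b).mulVec v l = 0) ∧ ∀ p ∈ J, v p.1 = ε * v p.2}

/-- Dynamical non-emptiability (Angeli–De Leenheer–Sontag): `F_ε(I) ∩ C(I) = {0}`. -/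
def DynNonEmptiable {m r : ℕ} (a b : Fin r → Fin m → ℕ) (I : Set (Fin m)) : Prop :=
  ∃ ε > (0:ℝ), critCone a b I ∩ feasCone (precSet a I) ε = {0}

/-- Weak dynamical non-emptiability: `C(I) ∩ F_ε(J) ⊆ ker(I,J,ε)` for some `ε > 0`, `J ⊆ R_I`. -/
def WeaklyDynNonEmptiable {m r : ℕ} (a b : Fin r → Fin m → ℕ) (I : Set (Fin m)) : Prop :=
  ∃ ε > (0:ℝ), ∃ J ⊆ precSet a I, critCone a b I ∩ feasCone J ε ⊆ kerIJ a b I J ε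

/-- `I` contains the support of a semi-conservation vector. -/
def ContainsSemiConsSupport {m r : ℕ} (a b : Fin r → Fin m → ℕ) (I : Set (Fin m)) : Prop :=
  ∃ c : Fin m → ℝ, (∀ i, 0 ≤ c i) ∧ (∃ i, 0 < c i) ∧
    Matrix.vecMul c (Gamma a b) = 0 ∧ ∀ i, 0 < c i → i ∈ I

/-- A semi-locking set is critical if it contains no support of a semi-conservation vector. -/
def IsCritical {m r : ℕ} (a b : Fin r → Fin m → ℕ) (I : Set (Fin m)) : Prop :=
  ¬ ContainsSemiConsSupport a b I

/-- Weak reversibility: in the directed reaction graph on complexes, the reactant complex of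
every reaction is reachable from its product complex (equivalently, every connected
component is strongly connected). -/
def WeaklyReversible {m r : ℕ} (a b : Fin r → Fin m → ℕ) : Prop :=
  ∀ i : Fin r,
    Relation.ReflTransGen (fun y z : Fin m → ℕ => ∃ i', a i' = y ∧ b i' = z) (b i) (a i)

/-- The system is conservative: `cᵀ Γ = 0` for some strictly positive `c`. -/
def Conservative {m r : ℕ} (a b : Fin r → Fin m → ℕ) : Prop :=
  ∃ c : Fin m → ℝ, (∀ i, 0 < c i) ∧ Matrix.vecMul c (Gamma a b) = 0

lemma mono_aux (F F' : ℝ → ℝ) {s t : ℝ} (hst : s ≤ t)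
    (hd : ∀ u ∈ Set.Icc s t, HasDerivAt F (F' u) u)
    (h0 : ∀ u ∈ Set.Icc s t, 0 ≤ F' u) : F s ≤ F t := by
  have hmono : MonotoneOn F (Set.Icc s t) := by
    apply monotoneOn_of_deriv_nonneg (convex_Icc s t)
    · exact fun u hu => (hd u hu).continuousAt.continuousWithinAt
    · intro u hu
      exact (hd u (interior_subset hu)).differentiableAt.differentiableWithinAt
    · intro u hu
      rw [(hd u (interior_subset hu)).deriv]
      exact h0 u (interior_subset hu)
  exact hmono (Set.left_mem_Icc.2 hst) (Set.right_mem_Icc.2 hst) hst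

lemma const_aux (F : ℝ → ℝ) {s t : ℝ} (hst : s ≤ t)
    (hd : ∀ u ∈ Set.Icc s t, HasDerivAt F 0 u) : F s = F t := by
  have h1 := mono_aux F (fun _ => 0) hst hd (fun _ _ => le_rfl)
  have h2 := mono_aux (fun u => -F u) (fun _ => 0) hst
    (fun u hu => by simpa using (hd u hu).fun_neg) (fun _ _ => le_rfl)
  simp at h2; linarith

lemma gordan {n : ℕ} {ι : Type} [Fintype ι] (M : ι → (Fin n → ℝ))
    (hK : ∀ v : Fin n → ℝ, (∀ i, 0 ≤ v i) → (∀ ro, (∑ i, M ro i * v i) ≤ 0) → v = 0) :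
    ∃ ν : ι → ℝ, (∀ ro, 0 ≤ ν ro) ∧ ∀ i, 0 < ∑ ro, ν ro * M ro i := by
  classical
  by_contra hcon
  push_neg at hcon
  set C : Set (Fin n → ℝ) :=
    {w | ∃ ν : ι → ℝ, (∀ ro, 0 ≤ ν ro) ∧ w = fun i => ∑ ro, ν ro * M ro i} with hC
  set O : Set (Fin n → ℝ) := {w | ∀ i, 0 < w i} with hO
  have hdisj : Disjoint O C := by
    rw [Set.disjoint_left]
    rintro w hw ⟨ν, hν, rfl⟩
    obtain ⟨i, hi⟩ := hcon ν hν
    exact absurd (hw i) (not_lt.2 hi)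
  have hOopen : IsOpen O := by
    have : O = ⋂ i, (fun w : Fin n → ℝ => w i) ⁻¹' (Set.Ioi 0) := by
      ext w; simp [hO, Set.mem_iInter]
    rw [this]
    exact isOpen_iInter_of_finite fun i => (continuous_apply i).isOpen_preimage _ isOpen_Ioi
  have hOconv : Convex ℝ O := by
    intro w₁ h₁ w₂ h₂ p q hp hq hpq
    intro i
    simp only [Pi.add_apply, Pi.smul_apply, smul_eq_mul]
    rcases eq_or_lt_of_le hp with rfl' | hp'
    · simp only [← rfl'] at hpq ⊢; simpa using by nlinarith [h₂ i]
    · nlinarith [h₁ i, h₂ i]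
  have hCconv : Convex ℝ C := by
    rintro w₁ ⟨ν₁, hν₁, rfl⟩ w₂ ⟨ν₂, hν₂, rfl⟩ p q hp hq hpq
    refine ⟨fun ro => p * ν₁ ro + q * ν₂ ro,
      fun ro => add_nonneg (mul_nonneg hp (hν₁ ro)) (mul_nonneg hq (hν₂ ro)), ?_⟩
    funext i
    simp only [Pi.add_apply, Pi.smul_apply, smul_eq_mul, Finset.mul_sum, ← Finset.sum_add_distrib]
    congr 1; funext ro; ring
  obtain ⟨f, u, hfO, hfC⟩ := geometric_hahn_banach_open hOconv hOopen hCconv hdisj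
  have hzeroC : (0 : Fin n → ℝ) ∈ C := ⟨0, fun _ => le_rfl, by funext i; simp⟩
  have hu0 : u ≤ 0 := by simpa using hfC 0 hzeroC
  have h1O : (fun _ : Fin n => (1:ℝ)) ∈ O := fun i => one_pos
  have hf1 : f (fun _ => (1:ℝ)) < u := hfO _ h1O
  -- f ≤ 0 on the nonneg orthant
  have hfnonneg : ∀ w : Fin n → ℝ, (∀ i, 0 ≤ w i) → f w ≤ 0 := by
    intro w hw
    by_contra hfw
    push_neg at hfw
    have key : ∀ τ : ℝ, 0 < τ → τ * f w + f (fun _ => 1) < u := by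
      intro τ hτ
      have hmem : (fun i => τ * w i + 1) ∈ O := by
        intro i; simp only [hO, Set.mem_setOf_eq]; nlinarith [mul_nonneg hτ.le (hw i)]
      have h2 := hfO _ hmem
      have heq : (fun i => τ * w i + 1) = τ • w + (fun _ => (1:ℝ)) := by
        funext i; simp [mul_comm]
      rw [heq] at h2
      simpa [mul_comm] using h2
    have hnum : 0 < u - f (fun _ => (1:ℝ)) + 1 := by linarith
    have h1 := key ((u - f (fun _ => (1:ℝ)) + 1) / f w) (div_pos hnum hfw)
    rw [div_mul_cancel₀ _ (ne_of_gt hfw)] at h1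
    linarith
  -- f ≥ 0 on C
  have hfCpos : ∀ w ∈ C, 0 ≤ f w := by
    rintro w ⟨ν, hν, rfl⟩
    by_contra hfw
    push_neg at hfw
    have hτ : (0:ℝ) < (u - 1) / f (fun i => ∑ ro, ν ro * M ro i) := by
      apply div_pos_of_neg_of_neg <;> linarith
    set τ := (u - 1) / f (fun i => ∑ ro, ν ro * M ro i) with hτdef
    have hmem : (fun i => ∑ ro, (τ * ν ro) * M ro i) ∈ C :=
      ⟨fun ro => τ * ν ro, fun ro => mul_nonneg hτ.le (hν ro), rfl⟩
    have h2 := hfC _ hmem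
    have heq : (fun i => ∑ ro, (τ * ν ro) * M ro i) =
        τ • (fun i => ∑ ro, ν ro * M ro i) := by
      funext i; simp [Finset.mul_sum, mul_assoc]
    rw [heq, _root_.map_smul, smul_eq_mul, hτdef, div_mul_cancel₀ _ (ne_of_lt hfw)] at h2
    linarith
  set e : Fin n → (Fin n → ℝ) := fun i j => if i = j then 1 else 0 with he
  set v : Fin n → ℝ := fun i => -(f (e i)) with hv
  have hvnonneg : ∀ i, 0 ≤ v i := by
    intro i
    have := hfnonneg (e i) (fun j => by by_cases h : i = j <;> simp [he, h])
    simp only [hv]; linarith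
  have hflin : ∀ w : Fin n → ℝ, f w = ∑ i, w i * f (e i) := by
    intro w
    have hw : w = ∑ i, w i • e i := by
      funext j
      simp [he, Finset.sum_apply, Finset.sum_ite_eq]
    conv_lhs => rw [hw]
    rw [map_sum]
    congr 1; funext i; rw [_root_.map_smul]; simp
  have hrow : ∀ ro, (∑ i, M ro i * v i) ≤ 0 := by
    intro ro
    have hmem : M ro ∈ C := by
      refine ⟨fun ro' => if ro' = ro then 1 else 0,
        fun ro' => by dsimp only; split <;> norm_num, ?_⟩
      funext i
      simp [Finset.sum_ite_eq']
    have h0 := hfCpos _ hmem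
    rw [hflin (M ro)] at h0
    have heq2 : (∑ i, M ro i * v i) = -(∑ i, M ro i * f (e i)) := by
      rw [← Finset.sum_neg_distrib]
      congr 1; funext i; simp only [hv]; ring
    rw [heq2]; linarith
  have hv0 : v = 0 := hK v hvnonneg hrow
  have hfe : ∀ i, f (e i) = 0 := by
    intro i
    have h3 := congrFun hv0 i
    simp only [hv, Pi.zero_apply, neg_eq_zero] at h3
    exact h3
  have : f (fun _ : Fin n => (1:ℝ)) = 0 := by
    rw [hflin]
    exact Finset.sum_eq_zero fun i _ => by rw [hfe i, mul_zero]
  linarith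

section Traj
open Finset
variable {m r : ℕ} {a b : Fin r → Fin m → ℕ} {k : Fin r → ℝ} {x : ℝ → Fin m → ℝ}

lemma mulVec_apply (M : Matrix (Fin m) (Fin r) ℝ) (v : Fin r → ℝ) (j : Fin m) :
    M.mulVec v j = ∑ i, M j i * v i := rfl

lemma coord_deriv (hx : IsForwardSolution a b k x) (j : Fin m) {t : ℝ} (ht : 0 ≤ t) :
    HasDerivAt (fun s => x s j) ((Gamma a b).mulVec (rate a k (x t)) j) t :=
  hasDerivAt_pi.1 (hx t ht) j

lemma coord_contAt (hx : IsForwardSolution a b k x) (j : Fin m) {t : ℝ} (ht : 0 ≤ t) :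
    ContinuousAt (fun s => x s j) t :=
  (coord_deriv hx j ht).continuousAt

lemma rate_nonneg (hk : ∀ i, 0 < k i) (z : Fin m → ℝ) (hz : ∀ j, 0 ≤ z j) (i : Fin r) :
    0 ≤ rate a k z i :=
  mul_nonneg (hk i).le (Finset.prod_nonneg fun j _ => pow_nonneg (hz j) _)

lemma prod_le_M {M : ℝ} (z : Fin m → ℝ) (hz : ∀ j, 0 ≤ z j) (hzM : ∀ j, z j ≤ M)
    (e : Fin m → ℕ) : (∏ j, z j ^ e j) ≤ M ^ (∑ j, e j) := by
  rw [← Finset.prod_pow_eq_pow_sum]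
  exact Finset.prod_le_prod (fun j _ => pow_nonneg (hz j) _)
    (fun j _ => pow_le_pow_left₀ (hz j) (hzM j) _)

lemma rate_le_global {M : ℝ} (hk : ∀ i, 0 < k i) (z : Fin m → ℝ) (hz : ∀ j, 0 ≤ z j)
    (hzM : ∀ j, z j ≤ M) (i : Fin r) :
    rate a k z i ≤ k i * M ^ (∑ j, a i j) :=
  mul_le_mul_of_nonneg_left (prod_le_M z hz hzM _) (hk i).le

lemma rate_consume {M : ℝ} (hk : ∀ i, 0 < k i) (hM : 1 ≤ M) (z : Fin m → ℝ)
    (hz : ∀ j, 0 ≤ z j) (hzM : ∀ j, z j ≤ M) (i : Fin r) (j₀ : Fin m)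
    (hcons : 0 < a i j₀) :
    rate a k z i ≤ k i * (z j₀ * M ^ (∑ j, a i j)) := by
  have h1 : (∏ j, z j ^ a i j) = z j₀ ^ a i j₀ * ∏ j ∈ Finset.univ.erase j₀, z j ^ a i j :=
    (Finset.mul_prod_erase Finset.univ _ (Finset.mem_univ j₀)).symm
  have hM0 : (0:ℝ) ≤ M := le_trans zero_le_one hM
  have h2 : z j₀ ^ a i j₀ ≤ z j₀ * M ^ (a i j₀ - 1) := by
    obtain ⟨s, hs⟩ := Nat.exists_eq_succ_of_ne_zero (Nat.pos_iff_ne_zero.1 hcons)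
    rw [hs]
    simp only [pow_succ']
    rw [Nat.succ_sub_one]
    exact mul_le_mul_of_nonneg_left (pow_le_pow_left₀ (hz j₀) (hzM j₀) s) (hz j₀)
  have h3 : (∏ j ∈ Finset.univ.erase j₀, z j ^ a i j) ≤ M ^ (∑ j ∈ Finset.univ.erase j₀, a i j) := by
    rw [← Finset.prod_pow_eq_pow_sum]
    exact Finset.prod_le_prod (fun j _ => pow_nonneg (hz j) _)
      (fun j _ => pow_le_pow_left₀ (hz j) (hzM j) _)
  have h4 : (∏ j, z j ^ a i j) ≤ z j₀ * (M ^ (a i j₀ - 1) * M ^ (∑ j ∈ Finset.univ.erase j₀, a i j)) := by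
    rw [h1]
    calc z j₀ ^ a i j₀ * ∏ j ∈ Finset.univ.erase j₀, z j ^ a i j
        ≤ (z j₀ * M ^ (a i j₀ - 1)) * M ^ (∑ j ∈ Finset.univ.erase j₀, a i j) := by
          apply mul_le_mul h2 h3 (Finset.prod_nonneg fun j _ => pow_nonneg (hz j) _)
          exact mul_nonneg (hz j₀) (pow_nonneg hM0 _)
      _ = z j₀ * (M ^ (a i j₀ - 1) * M ^ (∑ j ∈ Finset.univ.erase j₀, a i j)) := by ring
  have h5 : M ^ (a i j₀ - 1) * M ^ (∑ j ∈ Finset.univ.erase j₀, a i j) ≤ M ^ (∑ j, a i j) := by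
    rw [← pow_add]
    apply pow_le_pow_right₀ hM
    have : (∑ j, a i j) = a i j₀ + ∑ j ∈ Finset.univ.erase j₀, a i j :=
      (Finset.add_sum_erase Finset.univ _ (Finset.mem_univ j₀)).symm
    omega
  have h6 : (∏ j, z j ^ a i j) ≤ z j₀ * M ^ (∑ j, a i j) :=
    le_trans h4 (mul_le_mul_of_nonneg_left h5 (hz j₀))
  exact mul_le_mul_of_nonneg_left h6 (hk i).le

/-- Positivity of trajectories. -/
lemma pos_traj (hk : ∀ i, 0 < k i) (hx : IsForwardSolution a b k x)
    (hpos0 : ∀ j, 0 < x 0 j) : ∀ t, 0 ≤ t → ∀ j, 0 < x t j := by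
  by_contra hcon
  push_neg at hcon
  obtain ⟨T, hT0, j₁, hj₁⟩ := hcon
  set A : Set ℝ := ⋃ j : Fin m, (Set.Icc 0 T ∩ (fun t => x t j) ⁻¹' Set.Iic 0) with hA
  have hclosed : IsClosed A := by
    apply isClosed_iUnion_of_finite
    intro j
    apply ContinuousOn.preimage_isClosed_of_isClosed _ isClosed_Icc isClosed_Iic
    intro t ht
    exact (coord_contAt hx j ht.1).continuousWithinAt
  have hAne : A.Nonempty := ⟨T, Set.mem_iUnion.2 ⟨j₁, ⟨⟨hT0, le_refl T⟩, hj₁⟩⟩⟩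
  have hbdd : BddBelow A := ⟨0, fun t ht => by
    obtain ⟨j, hj⟩ := Set.mem_iUnion.1 ht; exact hj.1.1⟩
  set T₁ := sInf A with hT₁
  have hT₁A : T₁ ∈ A := hclosed.csInf_mem hAne hbdd
  obtain ⟨j₀, hj₀mem⟩ := Set.mem_iUnion.1 hT₁A
  have hT₁0 : 0 ≤ T₁ := hj₀mem.1.1
  have hxT₁ : x T₁ j₀ ≤ 0 := hj₀mem.2
  have h0T₁ : 0 < T₁ := by
    rcases lt_or_eq_of_le hT₁0 with h | h
    · exact h
    · exact absurd hxT₁ (not_le.2 (by rw [← h]; exact hpos0 j₀))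
  have hpos : ∀ t, 0 ≤ t → t < T₁ → ∀ j, 0 < x t j := by
    intro t ht htT₁ j
    by_contra hc
    push_neg at hc
    have : t ∈ A := Set.mem_iUnion.2 ⟨j, ⟨⟨ht, le_trans htT₁.le hj₀mem.1.2⟩, hc⟩⟩
    exact absurd (csInf_le hbdd this) (not_le.2 htT₁)
  have hnn : ∀ t ∈ Set.Icc (0:ℝ) T₁, ∀ j, 0 ≤ x t j := by
    rintro t ⟨ht0, htT₁⟩ j
    rcases lt_or_eq_of_le htT₁ with h | h
    · exact (hpos t ht0 h j).le
    · by_contra hc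
      push_neg at hc
      have h0t : 0 < t := by rw [h]; exact h0T₁
      have hev : (fun s => x s j) ⁻¹' Set.Iio 0 ∈ nhds t :=
        (coord_contAt hx j ht0).preimage_mem_nhds (Iio_mem_nhds hc)
      have hIoo : Set.Ioo 0 t ∈ nhdsWithin t (Set.Iio t) :=
        Ioo_mem_nhdsLT_of_mem ⟨h0t, le_refl t⟩
      have hne : ((fun s => x s j) ⁻¹' Set.Iio 0 ∩ Set.Ioo 0 t).Nonempty :=
        Filter.nonempty_of_mem (Filter.inter_mem (nhdsWithin_le_nhds hev) hIoo)
      obtain ⟨s, hs1, hs2⟩ := hne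
      have hsT₁ : s < T₁ := by rw [← h]; exact hs2.2
      exact absurd hs1 (not_lt.2 (hpos s hs2.1.le hsT₁ j).le)
  -- bound
  have hgcont : ContinuousOn (fun t => ∑ j, x t j) (Set.Icc 0 T₁) := by
    apply continuousOn_finset_sum
    intro j _
    exact fun t ht => (coord_contAt hx j ht.1).continuousWithinAt
  obtain ⟨tm, htm, hmax⟩ := isCompact_Icc.exists_isMaxOn (Set.nonempty_Icc.2 hT₁0) hgcont
  set M : ℝ := max 1 (∑ j, x tm j) with hMdef
  have hM1 : (1:ℝ) ≤ M := le_max_left _ _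
  have hM0 : (0:ℝ) ≤ M := le_trans zero_le_one hM1
  have hMb : ∀ t ∈ Set.Icc (0:ℝ) T₁, ∀ j, x t j ≤ M := by
    intro t ht j
    have h1 : x t j ≤ ∑ j', x t j' :=
      Finset.single_le_sum (fun j' _ => hnn t ht j') (Finset.mem_univ j)
    exact le_trans h1 (le_trans (hmax ht) (le_max_right _ _))
  set C : ℝ := ∑ i, ((a i j₀ : ℝ) + (b i j₀ : ℝ)) * k i * M ^ (∑ j, a i j) with hCdef
  have hC0 : 0 ≤ C := Finset.sum_nonneg fun i _ =>
    mul_nonneg (mul_nonneg (add_nonneg (Nat.cast_nonneg _) (Nat.cast_nonneg _)) (hk i).le)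
      (pow_nonneg hM0 _)
  have key : ∀ t ∈ Set.Icc (0:ℝ) T₁,
      -(C * x t j₀) ≤ (Gamma a b).mulVec (rate a k (x t)) j₀ := by
    intro t ht
    rw [_root_.mulVec_apply, hCdef, Finset.sum_mul, ← Finset.sum_neg_distrib]
    apply Finset.sum_le_sum
    intro i _
    have hR0 : 0 ≤ rate a k (x t) i := rate_nonneg hk _ (hnn t ht) i
    by_cases hc : a i j₀ = 0
    · have hG : 0 ≤ Gamma a b j₀ i := by
        simp [Gamma, hc]
      have hcoef : (0:ℝ) ≤ ((a i j₀:ℝ) + b i j₀) * k i * M ^ (∑ j, a i j) :=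
        mul_nonneg (mul_nonneg (add_nonneg (Nat.cast_nonneg _) (Nat.cast_nonneg _)) (hk i).le)
          (pow_nonneg hM0 _)
      nlinarith [mul_nonneg hG hR0, mul_nonneg hcoef (hnn t ht j₀)]
    · have hRle : rate a k (x t) i ≤ k i * (x t j₀ * M ^ (∑ j, a i j)) :=
        rate_consume hk hM1 _ (hnn t ht) (hMb t ht) i j₀ (Nat.pos_of_ne_zero hc)
      have hca : (0:ℝ) ≤ (a i j₀ : ℝ) := Nat.cast_nonneg _
      have hcb : (0:ℝ) ≤ (b i j₀ : ℝ) := Nat.cast_nonneg _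
      have hGabs : |Gamma a b j₀ i| ≤ (a i j₀ : ℝ) + b i j₀ := by
        rw [Gamma, abs_le]
        exact ⟨by linarith, by linarith⟩
      have h1 : -((a i j₀ : ℝ) + b i j₀) * rate a k (x t) i ≤ Gamma a b j₀ i * rate a k (x t) i := by
        have := neg_abs_le (Gamma a b j₀ i)
        nlinarith [abs_nonneg (Gamma a b j₀ i)]
      have h2 : -(((a i j₀ : ℝ) + b i j₀) * k i * M ^ (∑ j, a i j) * x t j₀) ≤
          -((a i j₀ : ℝ) + b i j₀) * rate a k (x t) i := by
        have hab : (0:ℝ) ≤ (a i j₀ : ℝ) + b i j₀ := add_nonneg hca hcb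
        nlinarith
      linarith
  -- Gronwall-type conclusion
  set G : ℝ → ℝ := fun t => x t j₀ * Real.exp (C * t) with hGdef
  have hGderiv : ∀ t ∈ Set.Icc (0:ℝ) T₁, HasDerivAt G
      ((Gamma a b).mulVec (rate a k (x t)) j₀ * Real.exp (C * t) +
        x t j₀ * (Real.exp (C * t) * C)) t := by
    intro t ht
    have hexp : HasDerivAt (fun s => Real.exp (C * s)) (Real.exp (C * t) * C) t := by
      simpa using ((hasDerivAt_id t).const_mul C).exp
    exact (coord_deriv hx j₀ ht.1).mul hexp
  have hGmono : G 0 ≤ G T₁ := by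
    apply mono_aux G _ hT₁0 hGderiv
    intro t ht
    have hexp := Real.exp_pos (C * t)
    have hkey := key t ht
    have h7 : 0 ≤ ((Gamma a b).mulVec (rate a k (x t)) j₀ + C * x t j₀) * Real.exp (C * t) :=
      mul_nonneg (by linarith) hexp.le
    nlinarith [h7]
  have hG0 : 0 < G 0 := by
    simp only [hGdef]
    exact mul_pos (hpos0 j₀) (Real.exp_pos _)
  have hGT : G T₁ ≤ 0 := by
    have := Real.exp_pos (C * T₁)
    simp only [hGdef]
    nlinarith
  linarith

end Traj

section Omega
variable {m r : ℕ} {a b : Fin r → Fin m → ℕ} {k : Fin r → ℝ} {x : ℝ → Fin m → ℝ}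
  {y : Fin m → ℝ} {c : Fin m → ℝ}

lemma vecMul_apply (v : Fin m → ℝ) (M : Matrix (Fin m) (Fin r) ℝ) (i : Fin r) :
    Matrix.vecMul v M i = ∑ j, v j * M j i := rfl

lemma dot_deriv (hx : IsForwardSolution a b k x)
    (hc : Matrix.vecMul c (Gamma a b) = 0) {t : ℝ} (ht : 0 ≤ t) :
    HasDerivAt (fun s => ∑ j, c j * x s j) 0 t := by
  have h1 : HasDerivAt (fun s => ∑ j, c j * x s j)
      (∑ j, c j * ((Gamma a b).mulVec (rate a k (x t)) j)) t := by
    apply HasDerivAt.fun_sum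
    intro j _
    exact (coord_deriv hx j ht).const_mul (c j)
  have h2 : (∑ j, c j * ((Gamma a b).mulVec (rate a k (x t)) j)) = 0 := by
    have h3 : ∀ j, c j * ((Gamma a b).mulVec (rate a k (x t)) j)
        = ∑ i, c j * (Gamma a b j i * rate a k (x t) i) := by
      intro j; rw [_root_.mulVec_apply, Finset.mul_sum]
    rw [Finset.sum_congr rfl (fun j _ => h3 j), Finset.sum_comm]
    have h4 : ∀ i, (∑ j, c j * (Gamma a b j i * rate a k (x t) i))
        = Matrix.vecMul c (Gamma a b) i * rate a k (x t) i := by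
      intro i
      rw [_root_.vecMul_apply, Finset.sum_mul]
      congr 1; funext j; ring
    rw [Finset.sum_congr rfl (fun i _ => h4 i)]
    apply Finset.sum_eq_zero
    intro i _
    rw [hc]
    simp
  rw [← h2]
  exact h1

lemma dot_const (hx : IsForwardSolution a b k x)
    (hc : Matrix.vecMul c (Gamma a b) = 0) {t : ℝ} (ht : 0 ≤ t) :
    (∑ j, c j * x t j) = ∑ j, c j * x 0 j := by
  exact (const_aux (fun s => ∑ j, c j * x s j) ht
    (fun u hu => dot_deriv hx hc hu.1)).symm

lemma omega_visit (hy : MapClusterPt y atTop x) {ε : ℝ} (hε : 0 < ε) (T : ℝ) :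
    ∃ t, T ≤ t ∧ ∀ j, |x t j - y j| < ε := by
  have hopen : IsOpen {z : Fin m → ℝ | ∀ j, |z j - y j| < ε} := by
    have heq : {z : Fin m → ℝ | ∀ j, |z j - y j| < ε}
        = ⋂ j, (fun z : Fin m → ℝ => z j) ⁻¹' (Metric.ball (y j) ε) := by
      ext z
      simp [Real.dist_eq, Set.mem_iInter]
    rw [heq]
    exact isOpen_iInter_of_finite fun j =>
      (continuous_apply j).isOpen_preimage _ Metric.isOpen_ball
  have hmem : {z : Fin m → ℝ | ∀ j, |z j - y j| < ε} ∈ nhds y :=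
    hopen.mem_nhds (fun j => by simpa using hε)
  obtain ⟨t, ht, hball⟩ := Filter.frequently_atTop.1 ((mapClusterPt_iff_frequently.1 hy) _ hmem) T
  exact ⟨t, ht, hball⟩

lemma dot_const_omega (hx : IsForwardSolution a b k x)
    (hc : Matrix.vecMul c (Gamma a b) = 0) (hy : MapClusterPt y atTop x) :
    (∑ j, c j * y j) = ∑ j, c j * x 0 j := by
  by_contra hne
  set D := |(∑ j, c j * y j) - ∑ j, c j * x 0 j| with hD
  have hD0 : 0 < D := abs_pos.2 (sub_ne_zero.2 hne)
  set S := ∑ j, |c j| with hS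
  have hS0 : 0 ≤ S := Finset.sum_nonneg fun j _ => abs_nonneg _
  have hδ : 0 < D / (2 * (S + 1)) := by positivity
  obtain ⟨t, ht, hvisit⟩ := omega_visit hy hδ 0
  have h1 : |(∑ j, c j * y j) - ∑ j, c j * x t j| ≤ S * (D / (2 * (S + 1))) := by
    have h2 : (∑ j, c j * y j) - ∑ j, c j * x t j = ∑ j, c j * (y j - x t j) := by
      rw [← Finset.sum_sub_distrib]
      congr 1; funext j; ring
    rw [h2, hS, Finset.sum_mul]
    refine le_trans (Finset.abs_sum_le_sum_abs _ _) (Finset.sum_le_sum fun j _ => ?_)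
    rw [abs_mul]
    have h3 : |y j - x t j| ≤ D / (2 * (S + 1)) := by
      rw [abs_sub_comm]
      exact (hvisit j).le
    exact mul_le_mul_of_nonneg_left h3 (abs_nonneg _)
  rw [dot_const hx hc ht] at h1
  have h4 : S * (D / (2 * (S + 1))) < D := by
    rw [div_eq_inv_mul, ← mul_assoc]
    have h5 : S * (2 * (S + 1))⁻¹ < 1 := by
      rw [mul_inv_lt_iff₀ (by linarith)]
      linarith
    nlinarith
  rw [← hD] at h1
  linarith

lemma traj_bound (hx : IsForwardSolution a b k x)
    (hpos : ∀ t, 0 ≤ t → ∀ j, 0 < x t j) (hc0 : ∀ j, 0 < c j)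
    (hc : Matrix.vecMul c (Gamma a b) = 0) :
    ∀ t, 0 ≤ t → ∀ j, x t j ≤ 1 + ∑ j', (∑ j'', c j'' * x 0 j'') / c j' := by
  intro t ht j
  set K := ∑ j'', c j'' * x 0 j'' with hK
  have hK0 : 0 ≤ K := Finset.sum_nonneg fun j' _ =>
    mul_nonneg (hc0 j').le (hpos 0 le_rfl j').le
  have h1 : c j * x t j ≤ ∑ j'', c j'' * x t j'' :=
    Finset.single_le_sum (fun j' _ => mul_nonneg (hc0 j').le (hpos t ht j').le)
      (Finset.mem_univ j)
  rw [dot_const hx hc ht] at h1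
  have h2 : x t j ≤ K / c j := (le_div_iff₀ (hc0 j)).2 (by rw [mul_comm]; exact h1)
  have h3 : K / c j ≤ ∑ j', K / c j' :=
    Finset.single_le_sum (fun j' _ => div_nonneg hK0 (hc0 j').le) (Finset.mem_univ j)
  linarith

end Omega

section Siphon
open Finset
variable {m r : ℕ} {a b : Fin r → Fin m → ℕ} {k : Fin r → ℝ} {x : ℝ → Fin m → ℝ}
  {y : Fin m → ℝ}

lemma half_aux {B v : ℝ} (hB0 : 0 ≤ B) (hv : 0 < v) : B * (v / (2 * (B + 1))) ≤ v / 2 := by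
  have h2b : (0:ℝ) < 2 * (B + 1) := by linarith
  rw [← mul_div_assoc, div_le_div_iff₀ h2b two_pos]
  nlinarith

lemma lip_aux (F F' : ℝ → ℝ) {s t B : ℝ} (hst : s ≤ t)
    (hd : ∀ u ∈ Set.Icc s t, HasDerivAt F (F' u) u)
    (hb : ∀ u ∈ Set.Icc s t, |F' u| ≤ B) : |F t - F s| ≤ B * (t - s) := by
  have h1 : B * s - F s ≤ B * t - F t := by
    apply mono_aux (fun u => B * u - F u) (fun u => B - F' u) hst
    · intro u hu
      have h := ((hasDerivAt_id u).const_mul B).fun_sub (hd u hu)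
      simpa using h
    · intro u hu
      have := (abs_le.1 (hb u hu)).2
      linarith
  have h2 : B * s + F s ≤ B * t + F t := by
    apply mono_aux (fun u => B * u + F u) (fun u => B + F' u) hst
    · intro u hu
      have h := ((hasDerivAt_id u).const_mul B).fun_add (hd u hu)
      simpa using h
    · intro u hu
      have := (abs_le.1 (hb u hu)).1
      linarith
  rw [abs_le]
  constructor <;> nlinarith

lemma gamma_rate_lower {M : ℝ} (hk : ∀ i, 0 < k i) (hM1 : 1 ≤ M) (z : Fin m → ℝ)
    (hz : ∀ j, 0 ≤ z j) (hzM : ∀ j, z j ≤ M) (i : Fin r) (j₀ : Fin m) :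
    -(((a i j₀ : ℝ) + b i j₀) * k i * M ^ (∑ j, a i j) * z j₀)
      ≤ Gamma a b j₀ i * rate a k z i := by
  have hM0 : (0:ℝ) ≤ M := le_trans zero_le_one hM1
  have hR0 : 0 ≤ rate a k z i := rate_nonneg hk _ hz i
  have hca : (0:ℝ) ≤ (a i j₀ : ℝ) := Nat.cast_nonneg _
  have hcb : (0:ℝ) ≤ (b i j₀ : ℝ) := Nat.cast_nonneg _
  by_cases hc : a i j₀ = 0
  · have hG : 0 ≤ Gamma a b j₀ i := by simp [Gamma, hc]
    have hcoef : (0:ℝ) ≤ ((a i j₀:ℝ) + b i j₀) * k i * M ^ (∑ j, a i j) :=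
      mul_nonneg (mul_nonneg (add_nonneg hca hcb) (hk i).le) (pow_nonneg hM0 _)
    nlinarith [mul_nonneg hG hR0, mul_nonneg hcoef (hz j₀)]
  · have hRle : rate a k z i ≤ k i * (z j₀ * M ^ (∑ j, a i j)) :=
      rate_consume hk hM1 _ hz hzM i j₀ (Nat.pos_of_ne_zero hc)
    have hGabs : |Gamma a b j₀ i| ≤ (a i j₀ : ℝ) + b i j₀ := by
      rw [Gamma, abs_le]
      exact ⟨by linarith, by linarith⟩
    have h1 : -((a i j₀ : ℝ) + b i j₀) * rate a k z i ≤ Gamma a b j₀ i * rate a k z i := by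
      have := neg_abs_le (Gamma a b j₀ i)
      nlinarith [abs_nonneg (Gamma a b j₀ i)]
    have h2 : -(((a i j₀ : ℝ) + b i j₀) * k i * M ^ (∑ j, a i j) * z j₀) ≤
        -((a i j₀ : ℝ) + b i j₀) * rate a k z i := by
      have hab : (0:ℝ) ≤ (a i j₀ : ℝ) + b i j₀ := add_nonneg hca hcb
      nlinarith
    linarith

lemma mulVec_bound {M : ℝ} (hk : ∀ i, 0 < k i) (hM1 : 1 ≤ M) (z : Fin m → ℝ)
    (hz : ∀ j, 0 ≤ z j) (hzM : ∀ j, z j ≤ M) (j : Fin m) :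
    |(Gamma a b).mulVec (rate a k z) j|
      ≤ ∑ i, (∑ j', ((a i j' : ℝ) + b i j')) * (k i * M ^ (∑ j', a i j')) := by
  rw [_root_.mulVec_apply]
  refine le_trans (Finset.abs_sum_le_sum_abs _ _) (Finset.sum_le_sum fun i _ => ?_)
  rw [abs_mul]
  have hR0 : 0 ≤ rate a k z i := rate_nonneg hk _ hz i
  have hRle : rate a k z i ≤ k i * M ^ (∑ j', a i j') := rate_le_global hk _ hz hzM i
  have habs : |rate a k z i| = rate a k z i := abs_of_nonneg hR0
  rw [habs]
  have hGabs : |Gamma a b j i| ≤ (a i j : ℝ) + b i j := by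
    have hca : (0:ℝ) ≤ (a i j : ℝ) := Nat.cast_nonneg _
    have hcb : (0:ℝ) ≤ (b i j : ℝ) := Nat.cast_nonneg _
    rw [Gamma, abs_le]
    exact ⟨by linarith, by linarith⟩
  have hsum : ((a i j : ℝ) + b i j) ≤ ∑ j', ((a i j' : ℝ) + b i j') :=
    Finset.single_le_sum (f := fun j' => ((a i j' : ℝ) + b i j'))
      (fun j' _ => add_nonneg (Nat.cast_nonneg _) (Nat.cast_nonneg _)) (Finset.mem_univ j)
  have hRB0 : 0 ≤ k i * M ^ (∑ j', a i j') :=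
    mul_nonneg (hk i).le (pow_nonneg (le_trans zero_le_one hM1) _)
  calc |Gamma a b j i| * rate a k z i
      ≤ ((a i j : ℝ) + b i j) * (k i * M ^ (∑ j', a i j')) := by
        apply mul_le_mul hGabs hRle hR0 (le_trans (abs_nonneg _) hGabs)
    _ ≤ (∑ j', ((a i j' : ℝ) + b i j')) * (k i * M ^ (∑ j', a i j')) :=
        mul_le_mul_of_nonneg_right hsum hRB0

/-- The zero set of an ω-limit point is a semi-locking set. -/
lemma zeroset_semilocking (hk : ∀ i, 0 < k i) (hx : IsForwardSolution a b k x)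
    (hpos : ∀ t, 0 ≤ t → ∀ j, 0 < x t j) {M : ℝ} (hM1 : 1 ≤ M)
    (hMb : ∀ t, 0 ≤ t → ∀ j, x t j ≤ M) (hy : MapClusterPt y atTop x)
    (hynn : ∀ j, 0 ≤ y j) (hZne : ∃ j, y j = 0) :
    IsSemiLocking a b {j | y j = 0} := by
  refine ⟨hZne, ?_⟩
  rintro i₀ ⟨j₀, hj₀Z, hbpos⟩
  by_contra hnc
  push_neg at hnc
  have haZ : ∀ l, y l = 0 → a i₀ l = 0 := fun l hl =>
    Nat.le_zero.mp (hnc l hl)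
  have hM0 : (0:ℝ) ≤ M := le_trans zero_le_one hM1
  -- constants
  obtain ⟨B, hBdef⟩ : ∃ v : ℝ, v = ∑ i, (∑ j', ((a i j' : ℝ) + b i j')) * (k i * M ^ (∑ j', a i j')) := ⟨_, rfl⟩
  have hB0 : 0 ≤ B := by
    rw [hBdef]
    exact Finset.sum_nonneg fun i _ =>
    mul_nonneg (Finset.sum_nonneg fun j' _ => add_nonneg (Nat.cast_nonneg _) (Nat.cast_nonneg _))
      (mul_nonneg (hk i).le (pow_nonneg hM0 _))
  have hlip : ∀ j : Fin m, ∀ s t : ℝ, 0 ≤ s → s ≤ t → |x t j - x s j| ≤ B * (t - s) := by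
    intro j s t hs hst
    apply lip_aux _ (fun u => (Gamma a b).mulVec (rate a k (x u)) j) hst
    · intro u hu
      exact coord_deriv hx j (le_trans hs hu.1)
    · intro u hu
      have hu0 : 0 ≤ u := le_trans hs hu.1
      rw [hBdef]
      exact mulVec_bound hk hM1 _ (fun j' => (hpos u hu0 j').le) (hMb u hu0) j
  -- lower bound for rate i₀ near y
  have hne : (Finset.univ : Finset (Fin m)).Nonempty := ⟨j₀, Finset.mem_univ j₀⟩
  obtain ⟨η, hηdef⟩ : ∃ v : ℝ, v = Finset.univ.inf' hne (fun j => if 0 < a i₀ j then y j / 2 else 1) := ⟨_, rfl⟩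
  have hη0 : 0 < η := by
    rw [hηdef, Finset.lt_inf'_iff]
    intro j _
    split
    · rename_i hja
      have hyj : 0 < y j := by
        rcases lt_or_eq_of_le (hynn j) with h | h
        · exact h
        · exact absurd (haZ j h.symm) (Nat.pos_iff_ne_zero.1 hja)
      linarith
    · exact one_pos
  have hηle : ∀ j, 0 < a i₀ j → η ≤ y j / 2 := by
    intro j hja
    have := Finset.inf'_le (f := fun j => if 0 < a i₀ j then y j / 2 else 1)
      (Finset.mem_univ j)
    rw [if_pos hja] at this
    rw [hηdef]
    exact this
  obtain ⟨ρ, hρdef⟩ : ∃ v : ℝ, v = k i₀ * ∏ j, (if 0 < a i₀ j then y j / 2 else 1) ^ (a i₀ j) := ⟨_, rfl⟩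
  have hρ0 : 0 < ρ := by
    rw [hρdef]
    apply mul_pos (hk i₀)
    apply Finset.prod_pos
    intro j _
    split
    · rename_i hja
      have hyj : 0 < y j := by
        rcases lt_or_eq_of_le (hynn j) with h | h
        · exact h
        · exact absurd (haZ j h.symm) (Nat.pos_iff_ne_zero.1 hja)
      positivity
    · norm_num
  have hrate_lb : ∀ z : Fin m → ℝ, (∀ j, 0 ≤ z j) → (∀ j, |z j - y j| ≤ η) →
      ρ ≤ rate a k z i₀ := by
    intro z hz hzy
    rw [hρdef, rate]
    apply mul_le_mul_of_nonneg_left _ (hk i₀).le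
    apply Finset.prod_le_prod
    · intro j _
      split
      · rename_i hja
        have hyj : 0 < y j := by
          rcases lt_or_eq_of_le (hynn j) with h | h
          · exact h
          · exact absurd (haZ j h.symm) (Nat.pos_iff_ne_zero.1 hja)
        positivity
      · simp
    · intro j _
      split
      · rename_i hja
        apply pow_le_pow_left₀ (by
          have := hηle j hja
          have hyj : 0 < y j := by
            rcases lt_or_eq_of_le (hynn j) with h | h
            · exact h
            · exact absurd (haZ j h.symm) (Nat.pos_iff_ne_zero.1 hja)
          linarith)
        have h1 := (abs_le.1 (hzy j)).1
        have := hηle j hja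
        linarith
      · rename_i hja
        have : a i₀ j = 0 := Nat.eq_zero_of_not_pos hja
        simp [this]
  -- derivative lower bound near y
  obtain ⟨C', hC'def⟩ : ∃ v : ℝ, v = ∑ i, ((a i j₀ : ℝ) + b i j₀) * k i * M ^ (∑ j, a i j) := ⟨_, rfl⟩
  have hC'0 : 0 ≤ C' := by
    rw [hC'def]
    exact Finset.sum_nonneg fun i _ =>
      mul_nonneg (mul_nonneg (add_nonneg (Nat.cast_nonneg _) (Nat.cast_nonneg _)) (hk i).le)
        (pow_nonneg hM0 _)
  have hderiv_lb : ∀ t, 0 ≤ t → (∀ j, |x t j - y j| ≤ η) →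
      ρ - C' * x t j₀ ≤ (Gamma a b).mulVec (rate a k (x t)) j₀ := by
    intro t ht hnear
    have hz : ∀ j, 0 ≤ x t j := fun j => (hpos t ht j).le
    have hzM : ∀ j, x t j ≤ M := hMb t ht
    rw [_root_.mulVec_apply]
    rw [← Finset.add_sum_erase _ _ (Finset.mem_univ i₀)]
    have hterm1 : ρ ≤ Gamma a b j₀ i₀ * rate a k (x t) i₀ := by
      have hG1 : (1:ℝ) ≤ Gamma a b j₀ i₀ := by
        rw [Gamma, haZ j₀ hj₀Z]
        push_cast
        have : (1:ℝ) ≤ (b i₀ j₀ : ℝ) := by exact_mod_cast hbpos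
        linarith
      have hRlb := hrate_lb (x t) hz hnear
      nlinarith
    have hterm2 : -(C' * x t j₀) ≤ ∑ i ∈ Finset.univ.erase i₀, Gamma a b j₀ i * rate a k (x t) i := by
      have h1 : ∀ i ∈ Finset.univ.erase i₀,
          -(((a i j₀ : ℝ) + b i j₀) * k i * M ^ (∑ j, a i j) * x t j₀)
            ≤ Gamma a b j₀ i * rate a k (x t) i :=
        fun i _ => gamma_rate_lower hk hM1 _ hz hzM i j₀
      have h2 : -(C' * x t j₀) ≤
          ∑ i ∈ Finset.univ.erase i₀,
            -(((a i j₀ : ℝ) + b i j₀) * k i * M ^ (∑ j, a i j) * x t j₀) := by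
        rw [Finset.sum_neg_distrib]
        have h3 : ∑ i ∈ Finset.univ.erase i₀,
            ((a i j₀ : ℝ) + b i j₀) * k i * M ^ (∑ j, a i j) * x t j₀
              ≤ C' * x t j₀ := by
          rw [hC'def, Finset.sum_mul]
          apply Finset.sum_le_sum_of_subset_of_nonneg (Finset.erase_subset _ _)
          intro i _ _
          exact mul_nonneg (mul_nonneg (mul_nonneg (add_nonneg (Nat.cast_nonneg _)
            (Nat.cast_nonneg _)) (hk i).le) (pow_nonneg hM0 _)) (hz j₀)
        linarith
      exact le_trans h2 (Finset.sum_le_sum h1)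
    linarith
  -- choose parameters and visit
  obtain ⟨δcap, hδcapdef⟩ : ∃ v : ℝ, v = ρ / (2 * (C' + 1)) := ⟨_, rfl⟩
  have hδcap0 : 0 < δcap := by
    rw [hδcapdef]
    have : (0:ℝ) < 2 * (C' + 1) := by linarith
    exact div_pos hρ0 this
  obtain ⟨τ, hτdef⟩ : ∃ v : ℝ, v = min (η / (2 * (B + 1))) (δcap / (2 * (B + 1))) := ⟨_, rfl⟩
  have hτ0 : 0 < τ := by
    rw [hτdef]
    exact lt_min (div_pos hη0 (by linarith)) (div_pos hδcap0 (by linarith))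
  obtain ⟨εv, hεvdef⟩ : ∃ v : ℝ, v = min (min (η / 2) (δcap / 2)) ((ρ / 4) * τ) := ⟨_, rfl⟩
  have hεv0 : 0 < εv := by
    rw [hεvdef]
    exact lt_min (lt_min (by linarith) (by linarith)) (mul_pos (by linarith) hτ0)
  obtain ⟨t₁, ht₁, hvis⟩ := omega_visit hy hεv0 τ
  have ht₁0 : 0 ≤ t₁ := le_trans hτ0.le ht₁
  have hsub0 : 0 ≤ t₁ - τ := by linarith
  have haux : ∀ v : ℝ, 0 < v → B * (v / (2 * (B + 1))) ≤ v / 2 :=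
    fun v hv => half_aux hB0 hv
  have hBτ : B * τ ≤ min (η / 2) (δcap / 2) := by
    rw [le_min_iff]
    constructor
    · have h1 : τ ≤ η / (2 * (B + 1)) := by rw [hτdef]; exact min_le_left _ _
      have h2 : B * τ ≤ B * (η / (2 * (B + 1))) := mul_le_mul_of_nonneg_left h1 hB0
      linarith [haux η hη0]
    · have h1 : τ ≤ δcap / (2 * (B + 1)) := by rw [hτdef]; exact min_le_right _ _
      have h2 : B * τ ≤ B * (δcap / (2 * (B + 1))) := mul_le_mul_of_nonneg_left h1 hB0
      linarith [haux δcap hδcap0]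
  have hnear : ∀ u ∈ Set.Icc (t₁ - τ) t₁, ∀ j, |x u j - y j| ≤ η := by
    rintro u ⟨hu1, hu2⟩ j
    have h1 : |x t₁ j - x u j| ≤ B * (t₁ - u) :=
      hlip j u t₁ (by linarith) hu2
    have h2 : B * (t₁ - u) ≤ B * τ := mul_le_mul_of_nonneg_left (by linarith) hB0
    have h3 := (hvis j).le
    have h4 : B * τ ≤ η / 2 := le_trans hBτ (min_le_left _ _)
    have h5 : εv ≤ η / 2 := by
      rw [hεvdef]; exact le_trans (min_le_left _ _) (min_le_left _ _)
    calc |x u j - y j| ≤ |x u j - x t₁ j| + |x t₁ j - y j| := abs_sub_le _ _ _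
      _ ≤ B * τ + εv := by
          rw [abs_sub_comm]
          exact add_le_add (le_trans h1 h2) h3
      _ ≤ η := by linarith
  have hsmall : ∀ u ∈ Set.Icc (t₁ - τ) t₁, x u j₀ ≤ δcap := by
    rintro u ⟨hu1, hu2⟩
    have h1 : |x t₁ j₀ - x u j₀| ≤ B * (t₁ - u) := hlip j₀ u t₁ (by linarith) hu2
    have h2 : B * (t₁ - u) ≤ B * τ := mul_le_mul_of_nonneg_left (by linarith) hB0
    have h3 := (hvis j₀).le
    have hyj₀ : y j₀ = 0 := hj₀Z
    have h4 : x t₁ j₀ ≤ εv := by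
      have := (abs_le.1 h3).2
      rw [hyj₀] at this
      linarith
    have h5 : x u j₀ ≤ x t₁ j₀ + B * τ := by
      have := (abs_le.1 (le_trans h1 h2)).1
      linarith
    have h6 : B * τ ≤ δcap / 2 := le_trans hBτ (min_le_right _ _)
    have h7 : εv ≤ δcap / 2 := by
      rw [hεvdef]; exact le_trans (min_le_left _ _) (min_le_right _ _)
    linarith
  have hgrow : ∀ u ∈ Set.Icc (t₁ - τ) t₁,
      ρ / 2 ≤ (Gamma a b).mulVec (rate a k (x u)) j₀ := by
    intro u hu
    have hu0 : 0 ≤ u := le_trans hsub0 hu.1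
    have h1 := hderiv_lb u hu0 (hnear u hu)
    have h2 := hsmall u hu
    have h3 : C' * x u j₀ ≤ C' * δcap := mul_le_mul_of_nonneg_left h2 hC'0
    have h4 : C' * δcap ≤ ρ / 2 := by
      rw [hδcapdef]
      exact half_aux hC'0 hρ0
    linarith
  -- monotone increase on the interval
  have hmono : x (t₁ - τ) j₀ + (ρ / 2) * τ ≤ x t₁ j₀ := by
    have := mono_aux (fun u => x u j₀ - (ρ / 2) * u)
      (fun u => (Gamma a b).mulVec (rate a k (x u)) j₀ - ρ / 2)
      (by linarith : t₁ - τ ≤ t₁)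
      (fun u hu => ((coord_deriv hx j₀ (le_trans hsub0 hu.1)).sub
        (((hasDerivAt_id u).const_mul (ρ / 2)).congr_deriv (by ring))))
      (fun u hu => by linarith [hgrow u hu])
    try simp only [] at this
    nlinarith [this]
  have hx1 : 0 < x (t₁ - τ) j₀ := hpos _ hsub0 j₀
  have hx2 : x t₁ j₀ ≤ εv := by
    have := (abs_le.1 (hvis j₀).le).2
    have hyj₀ : y j₀ = 0 := hj₀Z
    rw [hyj₀] at this
    linarith
  have hεvle : εv ≤ (ρ / 4) * τ := by rw [hεvdef]; exact min_le_right _ _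
  nlinarith
end Siphon

section DNE
open Finset
variable {m r : ℕ} {a b : Fin r → Fin m → ℕ} {k : Fin r → ℝ}

lemma locking_of_dne {I : Set (Fin m)} (hsl : IsSemiLocking a b I)
    (hdne : DynNonEmptiable a b I) : IsLocking a I := by
  classical
  obtain ⟨ε, hε, hcone⟩ := hdne
  refine ⟨hsl.1, ?_⟩
  intro i
  by_contra hno
  push_neg at hno
  have hnoa : ∀ l ∈ I, a i l = 0 := fun l hl => Nat.le_zero.mp (hno l hl)
  set v : Fin r → ℝ := fun i' => if ∀ l ∈ I, a i' l = 0 then 1 else 0 with hv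
  have hv0 : ∀ i', 0 ≤ v i' := by
    intro i'; rw [hv]; dsimp only; split <;> norm_num
  have hvcrit : v ∈ critCone a b I := by
    refine ⟨hv0, ?_⟩
    intro l hl
    rw [_root_.mulVec_apply]
    apply le_of_eq
    apply Finset.sum_eq_zero
    intro i' _
    rw [hv]
    dsimp only
    split
    · rename_i hsupp
      have hb0 : b i' l = 0 := by
        by_contra hb
        obtain ⟨l', hl', hal'⟩ := hsl.2 i' ⟨l, hl, Nat.pos_of_ne_zero hb⟩
        rw [hsupp l' hl'] at hal'
        exact absurd hal' (lt_irrefl 0)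
      rw [Gamma, hb0, hsupp l hl]
      norm_num
    · norm_num
  have hvfeas : v ∈ feasCone (precSet a I) ε := by
    refine ⟨hv0, ?_⟩
    rintro ⟨i1, i2⟩ hp
    obtain ⟨hall, l', hl', hlt⟩ := hp
    have hv1 : v i1 = 0 := by
      rw [hv]
      dsimp only
      rw [if_neg]
      intro hsupp
      rw [hsupp l' hl'] at hlt
      exact absurd hlt (Nat.not_lt_zero _)
    rw [hv1]
    exact mul_nonneg hε.le (hv0 i2)
  have hvmem : v ∈ critCone a b I ∩ feasCone (precSet a I) ε := ⟨hvcrit, hvfeas⟩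
  rw [hcone] at hvmem
  rw [Set.mem_singleton_iff] at hvmem
  have : v i = 0 := by rw [hvmem]; simp
  rw [hv] at this
  dsimp only at this
  rw [if_pos hnoa] at this
  norm_num at this

lemma sum_ite_pair {r : ℕ} (ε : ℝ) (p : Fin r × Fin r) (R : Fin r → ℝ) :
    (∑ i, ((if p.1 = i then (1:ℝ) else 0) - ε * (if p.2 = i then 1 else 0)) * R i)
      = R p.1 - ε * R p.2 := by
  have h3 : ∀ i, ((if p.1 = i then (1:ℝ) else 0) - ε * (if p.2 = i then 1 else 0)) * R i
      = (if p.1 = i then R i else 0) - ε * (if p.2 = i then R i else 0) := by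
    intro i
    by_cases hi1 : p.1 = i <;> by_cases hi2 : p.2 = i <;>
      simp [hi1, hi2] <;> ring
  rw [Finset.sum_congr rfl (fun i _ => h3 i), Finset.sum_sub_distrib]
  rw [Finset.sum_ite_eq, ← Finset.mul_sum, Finset.sum_ite_eq]
  simp

lemma feas_pointwise {M ε ρο : ℝ} (hk : ∀ i, 0 < k i) (hM1 : 1 ≤ M)
    (y : Fin m → ℝ) (hynn : ∀ j, 0 ≤ y j) (hε : 0 < ε) (hρ1 : ρο ≤ 1) (hρ0 : 0 ≤ ρο)
    [DecidablePred fun j : Fin m => y j = 0]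
    (hρle : ∀ p : Fin r × Fin r, prec a {j | y j = 0} p.1 p.2 →
      k p.1 * (ρο * M ^ (∑ j, a p.1 j)) ≤
        ε * (k p.2 * ∏ j ∈ Finset.univ.filter (fun j => ¬ y j = 0),
          (y j / 2) ^ (a p.2 j - a p.1 j)))
    (z : Fin m → ℝ) (hz : ∀ j, 0 ≤ z j) (hzM : ∀ j, z j ≤ M)
    (hzZ : ∀ j, y j = 0 → z j ≤ ρο) (hzNZ : ∀ j, ¬ y j = 0 → y j / 2 ≤ z j) :
    ∀ p : Fin r × Fin r, prec a {j | y j = 0} p.1 p.2 →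
      rate a k z p.1 ≤ ε * rate a k z p.2 := by
  rintro ⟨i1, i2⟩ hp
  have hp' := hp
  obtain ⟨hall, l', hl', hlt⟩ := hp
  simp only [Set.mem_setOf_eq] at hl' hall
  have hlt2 : a i2 l' < a i1 l' := hlt
  have hall2 : ∀ l, y l = 0 → a i2 l ≤ a i1 l := fun l hl => hall l hl
  set n : Fin m → ℕ := fun j => min (a i1 j) (a i2 j) with hn
  set p : Fin m → ℕ := fun j => a i1 j - a i2 j with hpdef
  set q : Fin m → ℕ := fun j => a i2 j - a i1 j with hq
  have ha1 : ∀ j, a i1 j = n j + p j := fun j => by rw [hn, hpdef]; dsimp only; omega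
  have ha2 : ∀ j, a i2 j = n j + q j := fun j => by rw [hn, hq]; dsimp only; omega
  have hsplit1 : (∏ j, z j ^ a i1 j) = (∏ j, z j ^ n j) * ∏ j, z j ^ p j := by
    rw [← Finset.prod_mul_distrib]
    exact Finset.prod_congr rfl fun j _ => by rw [ha1 j, pow_add]
  have hsplit2 : (∏ j, z j ^ a i2 j) = (∏ j, z j ^ n j) * ∏ j, z j ^ q j := by
    rw [← Finset.prod_mul_distrib]
    exact Finset.prod_congr rfl fun j _ => by rw [ha2 j, pow_add]
  have hzn : 0 ≤ ∏ j, z j ^ n j := Finset.prod_nonneg fun j _ => pow_nonneg (hz j) _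
  have hM0 : (0:ℝ) ≤ M := le_trans zero_le_one hM1
  -- Claim A
  have hpl' : 1 ≤ p l' := by rw [hpdef]; dsimp only; omega
  have hmemf : l' ∈ Finset.univ.filter (fun j => y j = 0) := by
    simp [hl']
  have hA1 : (∏ j ∈ Finset.univ.filter (fun j => y j = 0), z j ^ p j) ≤ ρο := by
    rw [← Finset.mul_prod_erase _ _ hmemf]
    have hz1 : ∀ j, y j = 0 → z j ≤ 1 := fun j hj => le_trans (hzZ j hj) hρ1
    have h1 : z l' ^ p l' ≤ ρο := by
      obtain ⟨s, hs⟩ := Nat.exists_eq_add_of_le hpl'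
      rw [hs, pow_add, pow_one]
      have h2 : z l' ^ s ≤ 1 := pow_le_one₀ (hz l') (hz1 l' hl')
      nlinarith [hz l', hzZ l' hl', pow_nonneg (hz l') s]
    have h3 : (∏ j ∈ (Finset.univ.filter (fun j => y j = 0)).erase l', z j ^ p j) ≤ 1 := by
      apply Finset.prod_le_one
      · exact fun j _ => pow_nonneg (hz j) _
      · intro j hj
        have hjZ : y j = 0 := by
          have := Finset.mem_of_mem_erase hj
          simp at this
          exact this
        exact pow_le_one₀ (hz j) (hz1 j hjZ)
    nlinarith [Finset.prod_nonneg (fun j (_ : j ∈ (Finset.univ.filter (fun j => y j = 0)).erase l') => pow_nonneg (hz j) (p j)), pow_nonneg (hz l') (p l')]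
  have hA2 : (∏ j ∈ Finset.univ.filter (fun j => ¬ y j = 0), z j ^ p j) ≤ M ^ (∑ j, a i1 j) := by
    calc (∏ j ∈ Finset.univ.filter (fun j => ¬ y j = 0), z j ^ p j)
        ≤ ∏ j ∈ Finset.univ.filter (fun j => ¬ y j = 0), M ^ p j :=
          Finset.prod_le_prod (fun j _ => pow_nonneg (hz j) _)
            (fun j _ => pow_le_pow_left₀ (hz j) (hzM j) _)
      _ = M ^ (∑ j ∈ Finset.univ.filter (fun j => ¬ y j = 0), p j) :=
          Finset.prod_pow_eq_pow_sum _ _ _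
      _ ≤ M ^ (∑ j, a i1 j) := by
          apply pow_le_pow_right₀ hM1
          calc (∑ j ∈ Finset.univ.filter (fun j => ¬ y j = 0), p j)
              ≤ ∑ j, p j := Finset.sum_le_sum_of_subset (Finset.filter_subset _ _)
            _ ≤ ∑ j, a i1 j := Finset.sum_le_sum fun j _ => by rw [hpdef]; dsimp only; omega
  have hA : (∏ j, z j ^ p j) ≤ ρο * M ^ (∑ j, a i1 j) := by
    rw [← Finset.prod_filter_mul_prod_filter_not Finset.univ (fun j => y j = 0)]
    have h0 : 0 ≤ ∏ j ∈ Finset.univ.filter (fun j => ¬ y j = 0), z j ^ p j :=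
      Finset.prod_nonneg fun j _ => pow_nonneg (hz j) _
    have h0' : 0 ≤ ∏ j ∈ Finset.univ.filter (fun j => y j = 0), z j ^ p j :=
      Finset.prod_nonneg fun j _ => pow_nonneg (hz j) _
    exact mul_le_mul hA1 hA2 h0 hρ0
  -- Claim B
  have hB : (∏ j ∈ Finset.univ.filter (fun j => ¬ y j = 0), (y j / 2) ^ q j)
      ≤ ∏ j, z j ^ q j := by
    rw [← Finset.prod_filter_mul_prod_filter_not Finset.univ (fun j => y j = 0)]
    have h1 : (∏ j ∈ Finset.univ.filter (fun j => y j = 0), z j ^ q j) = 1 := by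
      apply Finset.prod_eq_one
      intro j hj
      have hjZ : y j = 0 := by simp at hj; exact hj
      have hq0 : q j = 0 := by
        have := hall2 j hjZ
        rw [hq]
        dsimp only
        omega
      rw [hq0, pow_zero]
    rw [h1, one_mul]
    exact Finset.prod_le_prod
      (fun j _ => pow_nonneg (div_nonneg (hynn j) (by norm_num : (0:ℝ) ≤ 2)) _)
      (fun j hj => pow_le_pow_left₀ (div_nonneg (hynn j) (by norm_num : (0:ℝ) ≤ 2))
        (hzNZ j (by simpa using hj)) _)
  have hQ0 : 0 ≤ ∏ j ∈ Finset.univ.filter (fun j => ¬ y j = 0), (y j / 2) ^ q j :=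
    Finset.prod_nonneg fun j _ => pow_nonneg (div_nonneg (hynn j) (by norm_num : (0:ℝ) ≤ 2)) _
  calc rate a k z i1 = k i1 * ((∏ j, z j ^ n j) * ∏ j, z j ^ p j) := by
        simp only [rate]; rw [hsplit1]
    _ ≤ k i1 * ((∏ j, z j ^ n j) * (ρο * M ^ (∑ j, a i1 j))) := by
        apply mul_le_mul_of_nonneg_left _ (hk i1).le
        exact mul_le_mul_of_nonneg_left hA hzn
    _ = (k i1 * (ρο * M ^ (∑ j, a i1 j))) * (∏ j, z j ^ n j) := by ring
    _ ≤ (ε * (k i2 * ∏ j ∈ Finset.univ.filter (fun j => ¬ y j = 0), (y j / 2) ^ q j))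
          * (∏ j, z j ^ n j) := by
        apply mul_le_mul_of_nonneg_right _ hzn
        have h2 := hρle (i1, i2) hp'
        simpa [hq] using h2
    _ ≤ (ε * (k i2 * ∏ j, z j ^ q j)) * (∏ j, z j ^ n j) := by
        apply mul_le_mul_of_nonneg_right _ hzn
        apply mul_le_mul_of_nonneg_left _ hε.le
        exact mul_le_mul_of_nonneg_left hB (hk i2).le
    _ = ε * (k i2 * ((∏ j, z j ^ n j) * ∏ j, z j ^ q j)) := by ring
    _ = ε * rate a k z i2 := by simp only [rate]; rw [hsplit2]
end DNE

set_option maxHeartbeats 2000000 in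
/-- a conservative mass-action system whose critical semi-locking sets are all
dynamically non-emptiable and which has no two distinct nested critical locking sets is
persistent. -/
theorem stmt4 {m r : ℕ} (a b : Fin r → Fin m → ℕ) (k : Fin r → ℝ) (hk : ∀ i, 0 < k i)
    (hcons : Conservative a b)
    (hdne : ∀ I : Set (Fin m), IsSemiLocking a b I → IsCritical a b I →
      DynNonEmptiable a b I)
    (hnest : ¬ ∃ I₁ I₂ : Set (Fin m), IsLocking a I₁ ∧ IsCritical a b I₁ ∧
      IsLocking a I₂ ∧ IsCritical a b I₂ ∧ I₁ ⊂ I₂) :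
    ∀ x₀ : Fin m → ℝ, (∀ i, 0 < x₀ i) → ∀ x : ℝ → Fin m → ℝ, x 0 = x₀ →
      IsForwardSolution a b k x → omegaLimitSet x ∩ posBoundary m = ∅ := by
  intro x₀ hx₀ x hx0eq hx
  classical
  rw [Set.eq_empty_iff_forall_notMem]
  rintro y ⟨hyω, hynn, j₀, hj₀⟩
  have hy : MapClusterPt y atTop x := hyω
  have hpos0 : ∀ j, 0 < x 0 j := by rw [hx0eq]; exact hx₀
  have hpos : ∀ t, 0 ≤ t → ∀ j, 0 < x t j := pos_traj hk hx hpos0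
  -- no semiconservation vector supported in the zero set of y
  have hnoSC : ∀ c : Fin m → ℝ, (∀ l, 0 ≤ c l) → (∃ l, 0 < c l) →
      Matrix.vecMul c (Gamma a b) = 0 → (∀ l, 0 < c l → y l = 0) → False := by
    rintro c hc0 ⟨l₁, hl₁⟩ hcΓ hsupp
    have h1 := dot_const_omega hx hcΓ hy
    have hL : (∑ j, c j * y j) = 0 := by
      apply Finset.sum_eq_zero
      intro j _
      rcases lt_or_eq_of_le (hc0 j) with h | h
      · rw [hsupp j h, mul_zero]
      · rw [← h, zero_mul]
    have hR : 0 < ∑ j, c j * x 0 j :=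
      lt_of_lt_of_le (mul_pos hl₁ (hpos0 l₁))
        (Finset.single_le_sum (f := fun j => c j * x 0 j)
          (fun j _ => mul_nonneg (hc0 j) (hpos0 j).le) (Finset.mem_univ l₁))
    rw [hL] at h1
    linarith
  obtain ⟨c₀, hc₀pos, hc₀Γ⟩ := hcons
  -- global bound
  set M : ℝ := max 1 (1 + ∑ j', (∑ j'', c₀ j'' * x 0 j'') / c₀ j') with hMdef
  have hM1 : (1:ℝ) ≤ M := le_max_left _ _
  have hM0 : (0:ℝ) ≤ M := le_trans zero_le_one hM1
  have hMb : ∀ t, 0 ≤ t → ∀ j, x t j ≤ M := fun t ht j =>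
    le_trans (traj_bound hx hpos hc₀pos hc₀Γ t ht j) (le_max_right _ _)
  -- the zero set is a critical siphon, hence a locking set
  have hsemi : IsSemiLocking a b {j | y j = 0} :=
    zeroset_semilocking hk hx hpos hM1 hMb hy hynn ⟨j₀, hj₀⟩
  have hcrit : IsCritical a b {j | y j = 0} := by
    rintro ⟨c, hc0, hex, hcΓ, hsupp⟩
    exact hnoSC c hc0 hex hcΓ hsupp
  obtain ⟨ε, hε0, hcone⟩ := hdne _ hsemi hcrit
  have hlock : IsLocking a {j | y j = 0} := locking_of_dne hsemi ⟨ε, hε0, hcone⟩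
  -- the case r = 0 is impossible (the zero set would not be critical)
  rcases Nat.eq_zero_or_pos r with hr0 | hrpos
  · apply hnoSC (fun l => if l = j₀ then 1 else 0)
    · intro l; by_cases h : l = j₀ <;> simp [h]
    · exact ⟨j₀, by simp⟩
    · funext i
      exact absurd i.isLt (by omega)
    · intro l hl
      by_cases h : l = j₀
      · rw [h]; exact hj₀
      · rw [if_neg h] at hl; exact absurd hl (lt_irrefl 0)
  -- off-Z semi-conservation vectors from the no-nesting hypothesis
  have hoffc : ∀ j, ¬ y j = 0 → ∃ c : Fin m → ℝ, (∀ l, 0 ≤ c l) ∧ 0 < c j ∧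
      Matrix.vecMul c (Gamma a b) = 0 ∧ ∀ l, 0 < c l → (y l = 0 ∨ l = j) := by
    intro j hj
    have hlock' : IsLocking a (insert j {l | y l = 0}) := by
      refine ⟨⟨j, Set.mem_insert _ _⟩, fun i => ?_⟩
      obtain ⟨l, hl, hal⟩ := hlock.2 i
      exact ⟨l, Set.mem_insert_of_mem _ hl, hal⟩
    have hss : {l | y l = 0} ⊂ insert j {l | y l = 0} :=
      Set.ssubset_insert (by simpa using hj)
    have hnotcrit : ¬ IsCritical a b (insert j {l | y l = 0}) := by
      intro hcrit'
      exact hnest ⟨_, _, hlock, hcrit, hlock', hcrit', hss⟩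
    rw [IsCritical, not_not] at hnotcrit
    obtain ⟨c, hc0, hex, hcΓ, hsupp⟩ := hnotcrit
    have hcj : 0 < c j := by
      rcases lt_or_eq_of_le (hc0 j) with h | h
      · exact h
      · exfalso
        apply hnoSC c hc0 hex hcΓ
        intro l hl
        rcases Set.mem_insert_iff.1 (hsupp l hl) with h1 | h1
        · subst h1; rw [← h] at hl; exact absurd hl (lt_irrefl 0)
        · exact h1
    refine ⟨c, hc0, hcj, hcΓ, fun l hl => ?_⟩
    rcases Set.mem_insert_iff.1 (hsupp l hl) with h1 | h1
    · exact Or.inr h1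
    · exact Or.inl h1
  choose cc hcc0 hccpos hccΓ hccsupp using hoffc
  -- the finite zero set and W
  set Zf : Finset (Fin m) := Finset.univ.filter (fun j => y j = 0) with hZfdef
  have hj₀Zf : j₀ ∈ Zf := by rw [hZfdef]; simp [hj₀]
  set W : ℝ → ℝ := fun t => ∑ l ∈ Zf, x t l with hWdef
  have hWpos : ∀ t, 0 ≤ t → 0 < W t := by
    intro t ht
    rw [hWdef]
    exact lt_of_lt_of_le (hpos t ht j₀)
      (Finset.single_le_sum (fun l _ => (hpos t ht l).le) hj₀Zf)
  have hxleW : ∀ t, 0 ≤ t → ∀ l ∈ Zf, x t l ≤ W t := by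
    intro t ht l hl
    rw [hWdef]
    exact Finset.single_le_sum (fun l' _ => (hpos t ht l').le) hl
  -- control of off-Z coordinates
  set κf : Fin m → ℝ := fun j =>
    if hj : y j = 0 then 0 else (∑ l, cc j hj l) / cc j hj j with hκfdef
  have hκf0 : ∀ j, 0 ≤ κf j := by
    intro j
    rw [hκfdef]
    dsimp only
    split
    · exact le_rfl
    · rename_i hj
      exact div_nonneg (Finset.sum_nonneg fun l _ => hcc0 j hj l) (hccpos j hj).le
  have hcontrol : ∀ t, 0 ≤ t → ∀ j, ¬ y j = 0 →
      x t j ≤ y j ∧ y j - κf j * W t ≤ x t j := by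
    intro t ht j hj
    set c : Fin m → ℝ := cc j hj with hcdef
    have hc0' : ∀ l, 0 ≤ c l := fun l => hcc0 j hj l
    have hsupp' : ∀ l, 0 < c l → (y l = 0 ∨ l = j) := fun l => hccsupp j hj l
    have h1 : (∑ l, c l * x t l) = ∑ l, c l * x 0 l := dot_const hx (hccΓ j hj) ht
    have h2 : (∑ l, c l * y l) = ∑ l, c l * x 0 l := dot_const_omega hx (hccΓ j hj) hy
    have h3 : (∑ l, c l * x t l) = ∑ l, c l * y l := by rw [h1, h2]
    have hsplitx : (∑ l, c l * x t l) = c j * x t j + ∑ l ∈ Finset.univ.erase j, c l * x t l :=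
      (Finset.add_sum_erase _ _ (Finset.mem_univ j)).symm
    have hsplity : (∑ l, c l * y l) = c j * y j := by
      rw [← Finset.add_sum_erase _ (fun l => c l * y l) (Finset.mem_univ j)]
      have : (∑ l ∈ Finset.univ.erase j, c l * y l) = 0 := by
        apply Finset.sum_eq_zero
        intro l hl
        rcases lt_or_eq_of_le (hc0' l) with h | h
        · rcases hsupp' l h with h4 | h4
          · rw [h4, mul_zero]
          · exact absurd h4 (Finset.ne_of_mem_erase hl)
        · rw [← h, zero_mul]
      rw [this, add_zero]
    have hS0 : 0 ≤ ∑ l ∈ Finset.univ.erase j, c l * x t l :=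
      Finset.sum_nonneg fun l _ => mul_nonneg (hc0' l) (hpos t ht l).le
    have hkey : c j * x t j + (∑ l ∈ Finset.univ.erase j, c l * x t l) = c j * y j := by
      rw [← hsplitx, h3, hsplity]
    have hcj := hccpos j hj
    constructor
    · nlinarith
    · -- S ≤ (∑ c) * W t
      have hSW : (∑ l ∈ Finset.univ.erase j, c l * x t l) ≤ (∑ l, c l) * W t := by
        have hsub : (∑ l ∈ Finset.univ.erase j, c l * x t l) ≤ ∑ l ∈ Zf, c l * x t l := by
          rw [← Finset.sum_filter_add_sum_filter_not (Finset.univ.erase j) (fun l => l ∈ Zf)]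
          have hz2 : (∑ l ∈ (Finset.univ.erase j).filter (fun l => ¬ l ∈ Zf), c l * x t l) = 0 := by
            apply Finset.sum_eq_zero
            intro l hl
            rw [Finset.mem_filter] at hl
            have hlj : l ≠ j := Finset.ne_of_mem_erase hl.1
            have hlz : ¬ y l = 0 := by
              intro hc
              exact hl.2 (by rw [hZfdef]; simp [hc])
            rcases lt_or_eq_of_le (hc0' l) with h | h
            · rcases hsupp' l h with h4 | h4
              · exact absurd h4 hlz
              · exact absurd h4 hlj
            · rw [← h, zero_mul]
          rw [hz2, add_zero]
          apply Finset.sum_le_sum_of_subset_of_nonneg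
          · intro l hl
            exact (Finset.mem_filter.1 hl).2
          · intro l _ _
            exact mul_nonneg (hc0' l) (hpos t ht l).le
        have hsum2 : (∑ l ∈ Zf, c l * x t l) ≤ ∑ l ∈ Zf, (∑ l', c l') * x t l := by
          apply Finset.sum_le_sum
          intro l _
          exact mul_le_mul_of_nonneg_right
            (Finset.single_le_sum (fun l' _ => hc0' l') (Finset.mem_univ l))
            (hpos t ht l).le
        rw [hWdef]
        rw [Finset.mul_sum]
        exact le_trans hsub hsum2
      have hκval : κf j = (∑ l, c l) / c j := by
        rw [hκfdef]
        dsimp only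
        rw [dif_neg hj]
      have h5 : c j * (y j - x t j) ≤ (∑ l, c l) * W t := by nlinarith
      have h6 : y j - x t j ≤ ((∑ l, c l) * W t) / c j :=
        (le_div_iff₀ hcj).2 (by nlinarith)
      have h7 : κf j * W t = ((∑ l, c l) * W t) / c j := by rw [hκval]; ring
      linarith
  -- Gordan duality
  set prc : Fin r × Fin r → Prop := fun p => prec a {j | y j = 0} p.1 p.2 with hprcdef
  set Mrow : (Fin m ⊕ (Fin r × Fin r)) → (Fin r → ℝ) :=
    Sum.elim (fun l => if y l = 0 then (fun i => Gamma a b l i) else 0)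
      (fun p => if prc p then
        (fun i => (if p.1 = i then (1:ℝ) else 0) - ε * (if p.2 = i then 1 else 0)) else 0)
    with hMrowdef
  have hK : ∀ v : Fin r → ℝ, (∀ i, 0 ≤ v i) → (∀ ro, (∑ i, Mrow ro i * v i) ≤ 0) → v = 0 := by
    intro v hv0 hrows
    have hvc : v ∈ critCone a b {j | y j = 0} := by
      refine ⟨hv0, ?_⟩
      intro l hl
      have h1 := hrows (Sum.inl l)
      rw [hMrowdef] at h1
      simp only [Sum.elim_inl] at h1
      rw [if_pos (show y l = 0 from hl)] at h1
      rw [_root_.mulVec_apply]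
      exact h1
    have hvf : v ∈ feasCone (precSet a {j | y j = 0}) ε := by
      refine ⟨hv0, ?_⟩
      intro p hp
      have h1 := hrows (Sum.inr p)
      rw [hMrowdef] at h1
      simp only [Sum.elim_inr] at h1
      rw [if_pos (show prc p from hp)] at h1
      have h2 : (∑ i, ((if p.1 = i then (1:ℝ) else 0) - ε * (if p.2 = i then 1 else 0)) * v i)
          = v p.1 - ε * v p.2 := by
        have h3 : ∀ i, ((if p.1 = i then (1:ℝ) else 0) - ε * (if p.2 = i then 1 else 0)) * v i
            = (if p.1 = i then v i else 0) - ε * (if p.2 = i then v i else 0) := by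
          intro i
          by_cases hi1 : p.1 = i <;> by_cases hi2 : p.2 = i <;>
            simp [hi1, hi2] <;> ring
        rw [Finset.sum_congr rfl (fun i _ => h3 i), Finset.sum_sub_distrib]
        rw [Finset.sum_ite_eq, ← Finset.mul_sum, Finset.sum_ite_eq]
        simp
      rw [h2] at h1
      linarith
    have hmem : v ∈ critCone a b {j | y j = 0} ∩ feasCone (precSet a {j | y j = 0}) ε :=
      ⟨hvc, hvf⟩
    rw [hcone, Set.mem_singleton_iff] at hmem
    exact hmem
  obtain ⟨ν, hν0, hq⟩ := gordan Mrow hK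
  set lam : Fin m → ℝ := fun l => if y l = 0 then ν (Sum.inl l) else 0 with hlamdef
  set mu : Fin r × Fin r → ℝ := fun p => if prc p then ν (Sum.inr p) else 0 with hmudef
  have hlam0 : ∀ l, 0 ≤ lam l := by
    intro l
    rw [hlamdef]
    dsimp only
    split
    · exact hν0 _
    · exact le_rfl
  have hlam_off : ∀ l, ¬ y l = 0 → lam l = 0 := by
    intro l hl
    rw [hlamdef]
    dsimp only
    rw [if_neg hl]
  have hmu0 : ∀ p, 0 ≤ mu p := by
    intro p
    rw [hmudef]
    dsimp only
    split
    · exact hν0 _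
    · exact le_rfl
  have hmu_off : ∀ p, ¬ prc p → mu p = 0 := by
    intro p hp
    rw [hmudef]
    dsimp only
    rw [if_neg hp]
  have hqid : ∀ i, (∑ ro, ν ro * Mrow ro i) =
      (∑ l, lam l * Gamma a b l i) +
        ∑ p, mu p * ((if p.1 = i then (1:ℝ) else 0) - ε * (if p.2 = i then 1 else 0)) := by
    intro i
    rw [Fintype.sum_sum_type]
    congr 1
    · apply Finset.sum_congr rfl
      intro l _
      rw [hMrowdef, hlamdef]
      simp only [Sum.elim_inl]
      by_cases h : y l = 0
      · rw [if_pos h, if_pos h]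
      · rw [if_neg h, if_neg h]
        simp
    · apply Finset.sum_congr rfl
      intro p _
      rw [hMrowdef, hmudef]
      simp only [Sum.elim_inr]
      by_cases h : prc p
      · rw [if_pos h, if_pos h]
      · rw [if_neg h, if_neg h]
        simp
  obtain ⟨γ, hγdef⟩ : ∃ v : ℝ, v = (Finset.univ : Finset (Fin r)).inf'
      ⟨⟨0, hrpos⟩, Finset.mem_univ _⟩ (fun i => ∑ ro, ν ro * Mrow ro i) := ⟨_, rfl⟩
  have hγ0 : 0 < γ := by
    rw [hγdef]; refine (Finset.lt_inf'_iff _).2 ?_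
    exact fun i _ => hq i
  have hγle : ∀ i, γ ≤ ∑ ro, ν ro * Mrow ro i := by
    intro i
    rw [hγdef]
    exact Finset.inf'_le _ (Finset.mem_univ i)
  -- more constants
  obtain ⟨AB, hABdef⟩ : ∃ v : ℝ, v = ∑ i, ∑ l, ((a i l : ℝ) + b i l) := ⟨_, rfl⟩
  have hAB0 : 0 ≤ AB := by
    rw [hABdef]
    exact Finset.sum_nonneg fun i _ => Finset.sum_nonneg fun l _ =>
      add_nonneg (Nat.cast_nonneg _) (Nat.cast_nonneg _)
  have hgz : ∀ i, |∑ l ∈ Zf, Gamma a b l i| ≤ AB := by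
    intro i
    have h1 : |∑ l ∈ Zf, Gamma a b l i| ≤ ∑ l ∈ Zf, |Gamma a b l i| :=
      Finset.abs_sum_le_sum_abs _ _
    have h2 : (∑ l ∈ Zf, |Gamma a b l i|) ≤ ∑ l ∈ Zf, ((a i l : ℝ) + b i l) := by
      apply Finset.sum_le_sum
      intro l _
      have hca : (0:ℝ) ≤ (a i l : ℝ) := Nat.cast_nonneg _
      have hcb : (0:ℝ) ≤ (b i l : ℝ) := Nat.cast_nonneg _
      rw [Gamma, abs_le]
      exact ⟨by linarith, by linarith⟩
    have h3 : (∑ l ∈ Zf, ((a i l : ℝ) + b i l)) ≤ ∑ l, ((a i l : ℝ) + b i l) :=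
      Finset.sum_le_sum_of_subset_of_nonneg (Finset.subset_univ _)
        (fun l _ _ => add_nonneg (Nat.cast_nonneg _) (Nat.cast_nonneg _))
    have h4 : (∑ l, ((a i l : ℝ) + b i l)) ≤ AB := by
      rw [hABdef]
      exact Finset.single_le_sum (f := fun i => ∑ l, ((a i l : ℝ) + b i l))
        (fun i _ => Finset.sum_nonneg fun l _ =>
          add_nonneg (Nat.cast_nonneg _) (Nat.cast_nonneg _)) (Finset.mem_univ i)
    linarith
  set SR : ℝ → ℝ := fun t => ∑ i, rate a k (x t) i with hSRdef
  have hSR0 : ∀ t, 0 ≤ t → 0 ≤ SR t := fun t ht =>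
    Finset.sum_nonneg fun i _ => rate_nonneg hk _ (fun j => (hpos t ht j).le) i
  set L : ℝ → ℝ := fun t => ∑ l, lam l * x t l with hLdef
  have hL0 : ∀ t, 0 ≤ t → 0 ≤ L t := fun t ht =>
    Finset.sum_nonneg fun l _ => mul_nonneg (hlam0 l) (hpos t ht l).le
  have hWd : ∀ t, 0 ≤ t →
      HasDerivAt W (∑ i, (∑ l ∈ Zf, Gamma a b l i) * rate a k (x t) i) t := by
    intro t ht
    have h1 : HasDerivAt W (∑ l ∈ Zf, (Gamma a b).mulVec (rate a k (x t)) l) t :=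
      HasDerivAt.fun_sum fun l _ => coord_deriv hx l ht
    have heq : (∑ l ∈ Zf, (Gamma a b).mulVec (rate a k (x t)) l)
        = ∑ i, (∑ l ∈ Zf, Gamma a b l i) * rate a k (x t) i := by
      rw [Finset.sum_congr rfl (fun l (_ : l ∈ Zf) => _root_.mulVec_apply (Gamma a b) _ l),
        Finset.sum_comm]
      exact Finset.sum_congr rfl fun i _ => (Finset.sum_mul _ _ _).symm
    exact heq ▸ h1
  have hLd : ∀ t, 0 ≤ t →
      HasDerivAt L (∑ i, (∑ l, lam l * Gamma a b l i) * rate a k (x t) i) t := by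
    intro t ht
    have h1 : HasDerivAt L (∑ l, lam l * (Gamma a b).mulVec (rate a k (x t)) l) t :=
      HasDerivAt.fun_sum fun l _ => (coord_deriv hx l ht).const_mul (lam l)
    have heq : (∑ l, lam l * (Gamma a b).mulVec (rate a k (x t)) l)
        = ∑ i, (∑ l, lam l * Gamma a b l i) * rate a k (x t) i := by
      have h2 : ∀ l, lam l * (Gamma a b).mulVec (rate a k (x t)) l
          = ∑ i, lam l * (Gamma a b l i * rate a k (x t) i) := by
        intro l
        rw [_root_.mulVec_apply, Finset.mul_sum]
      rw [Finset.sum_congr rfl (fun l _ => h2 l), Finset.sum_comm]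
      exact Finset.sum_congr rfl fun i _ => by
        rw [Finset.sum_mul]
        exact Finset.sum_congr rfl fun l _ => by ring
    exact heq ▸ h1
  -- feasibility threshold
  have hpairne : (Finset.univ : Finset (Fin r × Fin r)).Nonempty :=
    ⟨(⟨0, hrpos⟩, ⟨0, hrpos⟩), Finset.mem_univ _⟩
  obtain ⟨ρ₁, hρ₁def⟩ : ∃ v : ℝ, v = Finset.univ.inf' hpairne (fun p =>
      if prc p then (ε * (k p.2 * ∏ j ∈ Finset.univ.filter (fun j => ¬ y j = 0),
        (y j / 2) ^ (a p.2 j - a p.1 j))) / (k p.1 * M ^ (∑ j, a p.1 j)) else 1) := ⟨_, rfl⟩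
  have hQpos : ∀ p : Fin r × Fin r, 0 < ∏ j ∈ Finset.univ.filter (fun j => ¬ y j = 0),
      (y j / 2) ^ (a p.2 j - a p.1 j) := by
    intro p
    apply Finset.prod_pos
    intro j hj
    have hjne : ¬ y j = 0 := by simpa using hj
    have hyj : 0 < y j := lt_of_le_of_ne (hynn j) (Ne.symm hjne)
    positivity
  have hdenpos : ∀ p : Fin r × Fin r, 0 < k p.1 * M ^ (∑ j, a p.1 j) :=
    fun p => mul_pos (hk p.1) (pow_pos (lt_of_lt_of_le one_pos hM1) _)
  have hρ₁0 : 0 < ρ₁ := by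
    rw [hρ₁def, Finset.lt_inf'_iff]
    intro p _
    split
    · exact div_pos (mul_pos hε0 (mul_pos (hk p.2) (hQpos p))) (hdenpos p)
    · exact one_pos
  have hρ₁le : ∀ p : Fin r × Fin r, prc p → ρ₁ * (k p.1 * M ^ (∑ j, a p.1 j)) ≤
      ε * (k p.2 * ∏ j ∈ Finset.univ.filter (fun j => ¬ y j = 0),
        (y j / 2) ^ (a p.2 j - a p.1 j)) := by
    intro p hp
    have h1 := Finset.inf'_le (f := fun p : Fin r × Fin r =>
      if prc p then (ε * (k p.2 * ∏ j ∈ Finset.univ.filter (fun j => ¬ y j = 0),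
        (y j / 2) ^ (a p.2 j - a p.1 j))) / (k p.1 * M ^ (∑ j, a p.1 j)) else 1)
      (Finset.mem_univ p)
    rw [if_pos hp] at h1
    rw [← hρ₁def] at h1
    exact (le_div_iff₀ (hdenpos p)).1 h1
  obtain ⟨ρ₂, hρ₂def⟩ : ∃ v : ℝ, v = Finset.univ.inf' ⟨j₀, Finset.mem_univ _⟩
      (fun j => if y j = 0 then 1 else y j / (2 * (κf j + 1))) := ⟨_, rfl⟩
  have hρ₂0 : 0 < ρ₂ := by
    rw [hρ₂def]; refine (Finset.lt_inf'_iff _).2 ?_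
    intro j _
    split
    · exact one_pos
    · rename_i hj
      have hyj : 0 < y j := lt_of_le_of_ne (hynn j) (Ne.symm hj)
      have hκ := hκf0 j
      have h2 : (0:ℝ) < 2 * (κf j + 1) := by linarith
      exact div_pos hyj h2
  have hρ₂le : ∀ j, ¬ y j = 0 → ρ₂ ≤ y j / (2 * (κf j + 1)) := by
    intro j hj
    have h1 := Finset.inf'_le (f := fun j => if y j = 0 then 1 else y j / (2 * (κf j + 1)))
      (Finset.mem_univ j)
    rw [if_neg hj] at h1
    rw [hρ₂def]
    exact h1
  obtain ⟨ρο, hροdef⟩ : ∃ v : ℝ, v = min 1 (min ρ₁ ρ₂) := ⟨_, rfl⟩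
  have hρο0 : 0 < ρο := by rw [hροdef]; exact lt_min one_pos (lt_min hρ₁0 hρ₂0)
  have hρο1 : ρο ≤ 1 := by rw [hροdef]; exact min_le_left _ _
  have hροa : ρο ≤ ρ₁ := by rw [hροdef]; exact le_trans (min_le_right _ _) (min_le_left _ _)
  have hροb : ρο ≤ ρ₂ := by rw [hροdef]; exact le_trans (min_le_right _ _) (min_le_right _ _)
  -- region feasibility
  have hreg : ∀ t, 0 ≤ t → W t ≤ ρο → ∀ p : Fin r × Fin r, prc p →
      rate a k (x t) p.1 ≤ ε * rate a k (x t) p.2 := by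
    intro t ht hWt
    apply feas_pointwise hk hM1 y hynn hε0 hρο1 hρο0.le
    · intro p hp
      have h1 := hρ₁le p hp
      have hden : 0 ≤ k p.1 * M ^ (∑ j, a p.1 j) := (hdenpos p).le
      calc k p.1 * (ρο * M ^ (∑ j, a p.1 j)) = ρο * (k p.1 * M ^ (∑ j, a p.1 j)) := by ring
        _ ≤ ρ₁ * (k p.1 * M ^ (∑ j, a p.1 j)) := mul_le_mul_of_nonneg_right hροa hden
        _ ≤ _ := h1
    · exact fun j => (hpos t ht j).le
    · exact hMb t ht
    · intro j hj
      exact le_trans (hxleW t ht j (by rw [hZfdef]; simp [hj])) hWt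
    · intro j hj
      have hc := (hcontrol t ht j hj).2
      have hyj : 0 < y j := lt_of_le_of_ne (hynn j) (Ne.symm hj)
      have h2 : κf j * W t ≤ κf j * ρ₂ :=
        mul_le_mul_of_nonneg_left (le_trans hWt hροb) (hκf0 j)
      have h3 : κf j * ρ₂ ≤ κf j * (y j / (2 * (κf j + 1))) :=
        mul_le_mul_of_nonneg_left (hρ₂le j hj) (hκf0 j)
      have h4 : κf j * (y j / (2 * (κf j + 1))) ≤ y j / 2 := half_aux (hκf0 j) hyj
      linarith
  -- growth estimates
  have hderivL : ∀ t, 0 ≤ t → W t ≤ ρο →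
      γ * SR t ≤ ∑ i, (∑ l, lam l * Gamma a b l i) * rate a k (x t) i := by
    intro t ht hWt
    have hfeas := hreg t ht hWt
    have hR0 : ∀ i, 0 ≤ rate a k (x t) i :=
      fun i => rate_nonneg hk _ (fun j => (hpos t ht j).le) i
    have h1 : (∑ i, (∑ l, lam l * Gamma a b l i) * rate a k (x t) i)
        = (∑ i, (∑ ro, ν ro * Mrow ro i) * rate a k (x t) i)
          - ∑ i, (∑ p, mu p * ((if p.1 = i then (1:ℝ) else 0)
              - ε * (if p.2 = i then 1 else 0))) * rate a k (x t) i := by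
      rw [← Finset.sum_sub_distrib]
      apply Finset.sum_congr rfl
      intro i _
      rw [hqid i]
      ring
    have h2 : (∑ i, (∑ p, mu p * ((if p.1 = i then (1:ℝ) else 0)
          - ε * (if p.2 = i then 1 else 0))) * rate a k (x t) i)
        = ∑ p, mu p * (rate a k (x t) p.1 - ε * rate a k (x t) p.2) := by
      have h3 : ∀ i, (∑ p, mu p * ((if p.1 = i then (1:ℝ) else 0)
            - ε * (if p.2 = i then 1 else 0))) * rate a k (x t) i
          = ∑ p, mu p * (((if p.1 = i then (1:ℝ) else 0)
            - ε * (if p.2 = i then 1 else 0)) * rate a k (x t) i) := by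
        intro i
        rw [Finset.sum_mul]
        exact Finset.sum_congr rfl fun p _ => by ring
      rw [Finset.sum_congr rfl (fun i _ => h3 i), Finset.sum_comm]
      apply Finset.sum_congr rfl
      intro p _
      rw [← Finset.mul_sum, sum_ite_pair]
    have h4 : (∑ p, mu p * (rate a k (x t) p.1 - ε * rate a k (x t) p.2)) ≤ 0 := by
      apply Finset.sum_nonpos
      intro p _
      by_cases hp : prc p
      · have h5 := hfeas p hp
        have h6 := hmu0 p
        nlinarith
      · rw [hmu_off p hp, zero_mul]
    have h7 : (∑ i, γ * rate a k (x t) i)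
        ≤ ∑ i, (∑ ro, ν ro * Mrow ro i) * rate a k (x t) i :=
      Finset.sum_le_sum fun i _ => mul_le_mul_of_nonneg_right (hγle i) (hR0 i)
    have h8 : γ * SR t = ∑ i, γ * rate a k (x t) i := by
      rw [hSRdef]
      exact Finset.mul_sum _ _ _
    rw [h1, h8]
    linarith
  have hderivW : ∀ t, 0 ≤ t →
      |∑ i, (∑ l ∈ Zf, Gamma a b l i) * rate a k (x t) i| ≤ AB * SR t := by
    intro t ht
    have hR0 : ∀ i, 0 ≤ rate a k (x t) i :=
      fun i => rate_nonneg hk _ (fun j => (hpos t ht j).le) i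
    calc |∑ i, (∑ l ∈ Zf, Gamma a b l i) * rate a k (x t) i|
        ≤ ∑ i, |(∑ l ∈ Zf, Gamma a b l i) * rate a k (x t) i| :=
          Finset.abs_sum_le_sum_abs _ _
      _ ≤ ∑ i, AB * rate a k (x t) i := by
          apply Finset.sum_le_sum
          intro i _
          rw [abs_mul, abs_of_nonneg (hR0 i)]
          exact mul_le_mul_of_nonneg_right (hgz i) (hR0 i)
      _ = AB * SR t := by rw [hSRdef]; exact (Finset.mul_sum _ _ _).symm
  -- relation L ≤ Λ W
  obtain ⟨Λ, hΛdef⟩ : ∃ v : ℝ, v = ∑ l, lam l := ⟨_, rfl⟩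
  have hΛ0 : 0 ≤ Λ := by
    rw [hΛdef]
    exact Finset.sum_nonneg fun l _ => hlam0 l
  have hLleW : ∀ t, 0 ≤ t → L t ≤ Λ * W t := by
    intro t ht
    have h1 : L t = ∑ l ∈ Zf, lam l * x t l := by
      rw [hLdef]
      dsimp only
      rw [← Finset.sum_filter_add_sum_filter_not Finset.univ (fun l => y l = 0)]
      have h2 : (∑ l ∈ Finset.univ.filter (fun l => ¬ y l = 0), lam l * x t l) = 0 :=
        Finset.sum_eq_zero fun l hl => by
          rw [hlam_off l (by simpa using hl), zero_mul]
      rw [h2, add_zero]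
    rw [h1]
    calc (∑ l ∈ Zf, lam l * x t l) ≤ ∑ l ∈ Zf, Λ * x t l := by
          apply Finset.sum_le_sum
          intro l _
          apply mul_le_mul_of_nonneg_right _ (hpos t ht l).le
          rw [hΛdef]
          exact Finset.single_le_sum (fun l' _ => hlam0 l') (Finset.mem_univ l)
      _ = Λ * W t := by rw [hWdef]; exact (Finset.mul_sum _ _ _).symm
  -- choose the visit radius
  have hW00 : 0 < W 0 := hWpos 0 le_rfl
  have hABΛ : 0 ≤ AB * Λ := mul_nonneg hAB0 hΛ0
  obtain ⟨δv, hδvdef⟩ : ∃ v : ℝ,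
      v = (γ * min ρο (W 0)) / (2 * (γ + AB * Λ + 1) * (m + 1)) := ⟨_, rfl⟩
  have hδv0 : 0 < δv := by
    rw [hδvdef]
    apply div_pos (mul_pos hγ0 (lt_min hρο0 hW00))
    have h1 : (0:ℝ) < γ + AB * Λ + 1 := by linarith
    have h2 : (0:ℝ) < (m:ℝ) + 1 := by positivity
    exact mul_pos (mul_pos two_pos h1) h2
  obtain ⟨t₁, ht₁0, hvis⟩ := omega_visit hy hδv0 0
  have hWt₁ : W t₁ ≤ m * δv := by
    have h1 : ∀ l ∈ Zf, x t₁ l ≤ δv := by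
      intro l hl
      have hyl : y l = 0 := by
        rw [hZfdef] at hl
        simpa using hl
      have h2 := (abs_le.1 (hvis l).le).2
      rw [hyl] at h2
      linarith
    calc W t₁ ≤ Zf.card • δv := Finset.sum_le_card_nsmul _ _ _ h1
      _ = (Zf.card : ℝ) * δv := nsmul_eq_mul _ _
      _ ≤ m * δv := by
          apply mul_le_mul_of_nonneg_right _ hδv0.le
          have h3 : Zf.card ≤ m := by
            calc Zf.card ≤ (Finset.univ : Finset (Fin m)).card := Finset.card_filter_le _ _
              _ = m := by rw [Finset.card_univ, Fintype.card_fin]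
          exact_mod_cast h3
  -- the key estimate
  have hEst : ∀ s, 0 ≤ s → s ≤ t₁ → (∀ u, s ≤ u → u ≤ t₁ → W u ≤ ρο) →
      γ * W s ≤ γ * W t₁ + AB * L t₁ := by
    intro s hs hst hregion
    have hPmono : γ * W s + AB * L s ≤ γ * W t₁ + AB * L t₁ := by
      apply mono_aux (fun u => γ * W u + AB * L u)
        (fun u => γ * (∑ i, (∑ l ∈ Zf, Gamma a b l i) * rate a k (x u) i)
          + AB * (∑ i, (∑ l, lam l * Gamma a b l i) * rate a k (x u) i)) hst
      · intro u hu
        exact ((hWd u (le_trans hs hu.1)).const_mul γ).add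
          ((hLd u (le_trans hs hu.1)).const_mul AB)
      · intro u hu
        have hu0 : 0 ≤ u := le_trans hs hu.1
        have h1 := hderivL u hu0 (hregion u hu.1 hu.2)
        have h2 := (abs_le.1 (hderivW u hu0)).1
        have h3 := hSR0 u hu0
        nlinarith [mul_le_mul_of_nonneg_left h1 hAB0, mul_le_mul_of_nonneg_left h2 hγ0.le]
    have h4 : 0 ≤ AB * L s := mul_nonneg hAB0 (hL0 s hs)
    linarith
  have hLt₁ : L t₁ ≤ Λ * W t₁ := hLleW t₁ ht₁0
  have hbound : γ * W t₁ + AB * L t₁ < γ * min ρο (W 0) := by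
    have h1 : AB * L t₁ ≤ AB * (Λ * W t₁) := by
      apply mul_le_mul_of_nonneg_left hLt₁ hAB0
    have h2 : γ * W t₁ + AB * (Λ * W t₁) ≤ (γ + AB * Λ) * (m * δv) := by
      have h3 : 0 ≤ γ + AB * Λ := by linarith
      nlinarith
    have h4 : (γ + AB * Λ) * (m * δv) < γ * min ρο (W 0) := by
      have hminn : 0 < γ * min ρο (W 0) := mul_pos hγ0 (lt_min hρο0 hW00)
      have hm0 : (0:ℝ) ≤ (m:ℝ) := Nat.cast_nonneg _
      have hD : (0:ℝ) < 2 * (γ + AB * Λ + 1) * ((m:ℝ) + 1) := by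
        have h5 : (0:ℝ) < (m:ℝ) + 1 := by positivity
        have h6 : (0:ℝ) < γ + AB * Λ + 1 := by linarith
        exact mul_pos (mul_pos two_pos h6) h5
      have hδvD : δv * (2 * (γ + AB * Λ + 1) * ((m:ℝ) + 1)) = γ * min ρο (W 0) := by
        rw [hδvdef]
        exact div_mul_cancel₀ _ (ne_of_gt hD)
      have hGm : (γ + AB * Λ) * (m:ℝ) < 2 * (γ + AB * Λ + 1) * ((m:ℝ) + 1) := by
        nlinarith
      nlinarith [mul_lt_mul_of_pos_right hGm hδv0, hδvD]
    linarith
  have hWt₁ρ : W t₁ < ρο := by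
    have h1 : γ * W t₁ ≤ γ * W t₁ + AB * L t₁ := by
      have := mul_nonneg hAB0 (hL0 t₁ ht₁0)
      linarith
    have h2 : γ * min ρο (W 0) ≤ γ * ρο :=
      mul_le_mul_of_nonneg_left (min_le_left _ _) hγ0.le
    nlinarith
  by_cases hcase : ∀ u, 0 ≤ u → u ≤ t₁ → W u ≤ ρο
  · have h := hEst 0 le_rfl ht₁0 hcase
    have h2 : γ * min ρο (W 0) ≤ γ * W 0 :=
      mul_le_mul_of_nonneg_left (min_le_right _ _) hγ0.le
    linarith
  · push_neg at hcase
    obtain ⟨u₀, hu₀0, hu₀t, hu₀W⟩ := hcase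
    set Abad : Set ℝ := Set.Icc 0 t₁ ∩ W ⁻¹' Set.Ici ρο with hAbad
    have hWcont : ContinuousOn W (Set.Icc 0 t₁) :=
      fun u hu => ((hWd u hu.1).continuousAt).continuousWithinAt
    have hclosed : IsClosed Abad :=
      ContinuousOn.preimage_isClosed_of_isClosed hWcont isClosed_Icc isClosed_Ici
    have hAne : Abad.Nonempty := ⟨u₀, ⟨⟨hu₀0, hu₀t⟩, hu₀W.le⟩⟩
    have hAbdd : BddAbove Abad := ⟨t₁, fun u hu => hu.1.2⟩
    have hsA : sSup Abad ∈ Abad := hclosed.csSup_mem hAne hAbdd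
    obtain ⟨⟨hs0, hst₁⟩, hsW⟩ := hsA
    have hslt : sSup Abad < t₁ := by
      rcases lt_or_eq_of_le hst₁ with h | h
      · exact h
      · exfalso
        rw [h] at hsW
        exact absurd hsW (not_le.2 hWt₁ρ)
    have hafter : ∀ u, sSup Abad < u → u ≤ t₁ → W u ≤ ρο := by
      intro u hsu hut
      by_contra hcon2
      push_neg at hcon2
      have hu0 : 0 ≤ u := le_trans hs0 hsu.le
      have : u ∈ Abad := ⟨⟨hu0, hut⟩, hcon2.le⟩
      exact absurd (le_csSup hAbdd this) (not_le.2 hsu)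
    have hs'bound : ∀ s', sSup Abad < s' → s' ≤ t₁ →
        γ * W s' ≤ γ * W t₁ + AB * L t₁ := by
      intro s' hss' hs't
      exact hEst s' (le_trans hs0 hss'.le) hs't
        (fun u hu hut => hafter u (lt_of_lt_of_le hss' hu) hut)
    have hWs : γ * W (sSup Abad) ≤ γ * W t₁ + AB * L t₁ := by
      by_contra hcon3
      push_neg at hcon3
      have hcont : ContinuousAt (fun u => γ * W u) (sSup Abad) :=
        continuousAt_const.mul ((hWd _ hs0).continuousAt)
      have hev : (fun u => γ * W u) ⁻¹' Set.Ioi (γ * W t₁ + AB * L t₁)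
          ∈ nhds (sSup Abad) :=
        hcont.preimage_mem_nhds (Ioi_mem_nhds hcon3)
      have hIoc : Set.Ioc (sSup Abad) t₁ ∈ nhdsWithin (sSup Abad) (Set.Ioi (sSup Abad)) :=
        Ioc_mem_nhdsGT_of_mem ⟨le_rfl, hslt⟩
      have hne2 : ((fun u => γ * W u) ⁻¹' Set.Ioi (γ * W t₁ + AB * L t₁)
          ∩ Set.Ioc (sSup Abad) t₁).Nonempty :=
        Filter.nonempty_of_mem (Filter.inter_mem (nhdsWithin_le_nhds hev) hIoc)
      obtain ⟨u, hu1, hu2⟩ := hne2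
      exact absurd (hs'bound u hu2.1 hu2.2) (not_le.2 hu1)
    have hfin1 : γ * ρο ≤ γ * W (sSup Abad) := mul_le_mul_of_nonneg_left hsW hγ0.le
    have hfin2 : γ * min ρο (W 0) ≤ γ * ρο :=
      mul_le_mul_of_nonneg_left (min_le_left _ _) hγ0.le
    linarith
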